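/- arXiv:0710.4047 — 8 statements merged into one kernel-verified Lean document; each statement's English description precedes it below -/
import Mathlib

section
/- The integral of x·cot(x) from 0 to π/2 equals (π/2)·log 2. -/
open Real Set MeasureTheory intervalIntegral Filter Topology

lemma contOn_mul_log : ContinuousOn (fun x : ℝ => x - x * Real.log x) (Icc 0 1) := by
  intro x hx
  rcases eq_or_lt_of_le hx.1 with h0 | h0
  · subst h0
    have h := tendsto_log_mul_rpow_nhdsGT_zero (r := 1) one_pos
    simp only [Real.rpow_one] at h
    have h1 : Tendsto (fun x : ℝ => x - x * Real.log x) (𝓝[>] 0) (𝓝 0) := by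
      have h2 : Tendsto (fun x : ℝ => x - Real.log x * x) (𝓝[>] 0) (𝓝 (0 - 0)) :=
        (tendsto_nhdsWithin_of_tendsto_nhds (continuous_id.tendsto 0)).sub h
      simp only [sub_zero] at h2
      exact h2.congr (fun x => by ring)
    have h2 : ContinuousWithinAt (fun x : ℝ => x - x * Real.log x) (Ioi 0) 0 := by
      unfold ContinuousWithinAt
      simpa using h1
    exact (continuousWithinAt_Ioi_iff_Ici.mp h2).mono Icc_subset_Ici_self
  · exact ((continuousAt_id.sub (continuousAt_id.mul (Real.continuousAt_log h0.ne'))).continuousWithinAt)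

lemma intInt_log01 : IntervalIntegrable Real.log volume 0 1 := by
  have h : IntegrableOn (fun x : ℝ => -Real.log x) (Ioc 0 1) := by
    apply intervalIntegral.integrableOn_deriv_of_nonneg contOn_mul_log
    · intro x hx
      have h1 : HasDerivAt (fun x : ℝ => x - x * Real.log x) (1 - (1 * Real.log x + x * x⁻¹)) x :=
        (hasDerivAt_id x).sub ((hasDerivAt_id x).mul (Real.hasDerivAt_log hx.1.ne'))
      convert h1 using 1
      rw [one_mul, mul_inv_cancel₀ hx.1.ne']
      ring
    · intro x hx
      simp only [neg_nonneg]
      exact Real.log_nonpos hx.1.le hx.2.le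
  rw [intervalIntegrable_iff_integrableOn_Ioc_of_le zero_le_one]
  have h2 := h.neg
  refine h2.congr (Filter.Eventually.of_forall fun x => ?_)
  simp

lemma intInt_log (b : ℝ) (hb : 0 < b) : IntervalIntegrable Real.log volume 0 b := by
  rcases le_total b 1 with h | h
  · exact intInt_log01.mono_set (by rw [uIcc_of_le hb.le, uIcc_of_le zero_le_one]; exact Icc_subset_Icc le_rfl h)
  · refine intInt_log01.trans (intervalIntegrable_log ?_)
    rw [uIcc_of_le h]
    intro h'
    linarith [h'.1]

lemma intInt_logsin : IntervalIntegrable (fun x => Real.log (Real.sin x)) volume 0 (π/2) := by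
  have hpi : (0:ℝ) < π/2 := by positivity
  rw [intervalIntegrable_iff_integrableOn_Ioc_of_le hpi.le]
  have hg : IntegrableOn (fun x => |Real.log x| + Real.log (π/2)) (Ioc 0 (π/2)) := by
    refine Integrable.add ?_ (integrableOn_const measure_Ioc_lt_top.ne)
    have := (intInt_log (π/2) hpi).abs
    rw [intervalIntegrable_iff_integrableOn_Ioc_of_le hpi.le] at this
    exact this
  refine hg.mono' ((Real.measurable_log.comp Real.measurable_sin).aestronglyMeasurable) ?_
  filter_upwards [ae_restrict_mem measurableSet_Ioc] with x hx
  have hx0 : 0 < x := hx.1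
  have hs : 0 < Real.sin x := Real.sin_pos_of_pos_of_lt_pi hx0 (by linarith [hx.2, pi_pos])
  have hub : Real.log (Real.sin x) ≤ Real.log x :=
    Real.log_le_log hs (Real.sin_le hx0.le)
  have hlb : Real.log (2/π) + Real.log x ≤ Real.log (Real.sin x) := by
    rw [← Real.log_mul (by positivity) hx0.ne']
    exact Real.log_le_log (by positivity) (Real.mul_le_sin hx0.le hx.2)
  have h2 : Real.log (2/π) = -Real.log (π/2) := by
    rw [← Real.log_inv]; norm_num
  rw [Real.norm_eq_abs, abs_le]
  constructor
  · rw [h2] at hlb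
    calc -(|Real.log x| + Real.log (π/2)) = -|Real.log x| + -Real.log (π/2) := by ring
    _ ≤ Real.log x + -Real.log (π/2) := by linarith [neg_abs_le (Real.log x)]
    _ ≤ Real.log (Real.sin x) := by linarith
  · have : (0:ℝ) ≤ Real.log (π/2) := Real.log_nonneg (by linarith [pi_gt_three])
    calc Real.log (Real.sin x) ≤ Real.log x := hub
    _ ≤ |Real.log x| := le_abs_self _
    _ ≤ _ := by linarith

lemma intInt_logcos : IntervalIntegrable (fun x => Real.log (Real.cos x)) volume 0 (π/2) := by
  have h := (intInt_logsin.comp_sub_left (π/2)).symm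
  simp only [sub_zero, sub_self] at h
  refine h.congr_ae (Filter.Eventually.of_forall fun x => ?_)
  simp [Real.sin_pi_div_two_sub]

lemma intInt_logsin' : IntervalIntegrable (fun x => Real.log (Real.sin x)) volume (π/2) π := by
  have h := intInt_logsin.comp_sub_left π
  simp only [sub_zero] at h
  have h2 : π - π/2 = π/2 := by ring
  rw [h2] at h
  refine h.symm.congr_ae (Filter.Eventually.of_forall fun x => ?_)
  simp [Real.sin_pi_sub]

lemma integral_logsin : ∫ x in (0:ℝ)..(π/2), Real.log (Real.sin x) = -(π/2) * Real.log 2 := by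
  set I := ∫ x in (0:ℝ)..(π/2), Real.log (Real.sin x) with hI
  have hpi2 : (0:ℝ) < π/2 := by positivity
  -- J = I
  have hJ : ∫ x in (0:ℝ)..(π/2), Real.log (Real.cos x) = I := by
    have := intervalIntegral.integral_comp_sub_left (a := 0) (b := π/2)
      (fun x => Real.log (Real.sin x)) (π/2)
    simp only [sub_zero, sub_self] at this
    rw [hI, ← this]
    apply intervalIntegral.integral_congr
    intro x _
    simp [Real.sin_pi_div_two_sub]
  -- ∫ sin(2x) over 0..π/2 = (1/2) ∫ 0..π
  have hdouble : ∫ x in (0:ℝ)..(π/2), Real.log (Real.sin (2*x))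
      = (2:ℝ)⁻¹ * ∫ x in (0:ℝ)..π, Real.log (Real.sin x) := by
    have := intervalIntegral.integral_comp_mul_left (a := 0) (b := π/2)
      (fun x => Real.log (Real.sin x)) (c := 2) two_ne_zero
    simp only [mul_zero] at this
    rw [this]
    have : 2 * (π/2) = π := by ring
    rw [this]
    norm_num
  -- ∫ 0..π = 2I
  have hpi : ∫ x in (0:ℝ)..π, Real.log (Real.sin x) = 2 * I := by
    rw [← intervalIntegral.integral_add_adjacent_intervals intInt_logsin intInt_logsin']
    have h2 : ∫ x in (π/2)..π, Real.log (Real.sin x) = I := by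
      have := intervalIntegral.integral_comp_sub_left (a := 0) (b := π/2)
        (fun x => Real.log (Real.sin x)) π
      simp only [sub_zero] at this
      have h3 : π - π/2 = π/2 := by ring
      rw [h3] at this
      rw [hI, ← this]
      apply intervalIntegral.integral_congr
      intro x _
      simp [Real.sin_pi_sub]
    rw [h2, ← hI]; ring
  -- I + J = ∫ log sin 2x - (π/2) log 2
  have key : I + I = 2⁻¹ * (2 * I) - (π/2) * Real.log 2 := by
    nth_rewrite 1 [hI]
    rw [← hJ, ← intervalIntegral.integral_add intInt_logsin intInt_logcos]
    have congr1 : ∫ x in (0:ℝ)..(π/2), (Real.log (Real.sin x) + Real.log (Real.cos x))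
        = ∫ x in (0:ℝ)..(π/2), (Real.log (Real.sin (2*x)) - Real.log 2) := by
      apply intervalIntegral.integral_congr_ae
      have hne : ∀ᵐ x : ℝ, x ≠ π/2 := by
        have : (volume ({π/2} : Set ℝ)) = 0 := Real.volume_singleton
        rw [ae_iff]
        convert this using 2
        ext x
        simp
      filter_upwards [hne] with x hx hmem
      rw [uIoc_of_le hpi2.le] at hmem
      have hx1 : 0 < x := hmem.1
      have hx2 : x < π/2 := lt_of_le_of_ne hmem.2 hx
      have hs : 0 < Real.sin x := Real.sin_pos_of_pos_of_lt_pi hx1 (by linarith [pi_pos])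
      have hc : 0 < Real.cos x := Real.cos_pos_of_mem_Ioo ⟨by linarith, hx2⟩
      rw [Real.sin_two_mul, ← Real.log_mul (by positivity) hc.ne',
        ← Real.log_div (by positivity) two_ne_zero]
      congr 1
      field_simp
    rw [congr1, intervalIntegral.integral_sub _ intervalIntegrable_const, hdouble,
      hpi, intervalIntegral.integral_const]
    · simp only [smul_eq_mul, sub_zero]
      rw [← hJ]
    · -- integrability of log sin (2x)
      have h := intInt_logsin.trans intInt_logsin'
      have h2 := h.comp_mul_left (c := 2) (by simp) (by simp)
      simpa using h2
  linarith [key]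

lemma intInt_xcot : IntervalIntegrable (fun x => x * (Real.cos x / Real.sin x)) volume 0 (π/2) := by
  have hpi2 : (0:ℝ) < π/2 := by positivity
  rw [intervalIntegrable_iff_integrableOn_Ioc_of_le hpi2.le]
  apply Measure.integrableOn_of_bounded (M := π/2) measure_Ioc_lt_top.ne
  · exact (measurable_id.mul (Real.measurable_cos.div Real.measurable_sin)).aestronglyMeasurable
  · filter_upwards [ae_restrict_mem measurableSet_Ioc] with x hx
    have hx0 : 0 < x := hx.1
    have hs : 0 < Real.sin x := Real.sin_pos_of_pos_of_lt_pi hx0 (by linarith [hx.2, pi_pos])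
    have hle : x ≤ (π/2) * Real.sin x := by
      have h := Real.mul_le_sin hx0.le hx.2
      have hπ := pi_pos
      rw [div_mul_eq_mul_div, div_le_iff₀ hπ] at h
      nlinarith
    rw [Real.norm_eq_abs, abs_mul, abs_div, abs_of_pos hx0, abs_of_pos hs,
      mul_div_assoc', div_le_iff₀ hs]
    nlinarith [abs_cos_le_one x, abs_nonneg (Real.cos x)]

lemma F_contOn : ContinuousOn (fun x => x * Real.log (Real.sin x)) (Icc 0 (π/2)) := by
  intro x hx
  rcases eq_or_lt_of_le hx.1 with h0 | h0
  · subst h0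
    have hxlogx : Tendsto (fun x : ℝ => Real.log x * x) (𝓝[>] 0) (𝓝 0) := by
      have := tendsto_log_mul_rpow_nhdsGT_zero (r := 1) one_pos
      simpa using this
    have hupper : Tendsto (fun x : ℝ => x * Real.log x) (𝓝[>] 0) (𝓝 0) :=
      hxlogx.congr (fun x => by ring)
    have hlower : Tendsto (fun x : ℝ => x * (Real.log (2/π) + Real.log x)) (𝓝[>] 0) (𝓝 0) := by
      have h1 : Tendsto (fun x : ℝ => x * Real.log (2/π)) (𝓝[>] 0) (𝓝 0) := by
        have h2 : Tendsto (fun x : ℝ => x * Real.log (2/π)) (𝓝 0) (𝓝 (0 * Real.log (2/π))) :=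
          (continuous_mul_right (Real.log (2/π))).tendsto 0
        rw [zero_mul] at h2
        exact tendsto_nhdsWithin_of_tendsto_nhds h2
      have := h1.add hupper
      simp only [add_zero] at this
      exact this.congr (fun x => by ring)
    have hsq : Tendsto (fun x : ℝ => x * Real.log (Real.sin x)) (𝓝[>] 0) (𝓝 0) := by
      apply tendsto_of_tendsto_of_tendsto_of_le_of_le' hlower hupper
      · filter_upwards [Ioo_mem_nhdsGT (by positivity : (0:ℝ) < π/2)] with x hx2
        obtain ⟨hx0, hxlt⟩ := hx2
        have hs : 0 < Real.sin x := Real.sin_pos_of_pos_of_lt_pi hx0 (by linarith [pi_pos, hxlt])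
        have : Real.log (2/π) + Real.log x ≤ Real.log (Real.sin x) := by
          rw [← Real.log_mul (by positivity) hx0.ne']
          exact Real.log_le_log (by positivity) (Real.mul_le_sin hx0.le hxlt.le)
        exact mul_le_mul_of_nonneg_left this hx0.le
      · filter_upwards [Ioo_mem_nhdsGT (by positivity : (0:ℝ) < π/2)] with x hx2
        obtain ⟨hx0, hxlt⟩ := hx2
        have hs : 0 < Real.sin x := Real.sin_pos_of_pos_of_lt_pi hx0 (by linarith [pi_pos, hxlt])
        exact mul_le_mul_of_nonneg_left (Real.log_le_log hs (Real.sin_le hx0.le)) hx0.le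
    have h2 : ContinuousWithinAt (fun x : ℝ => x * Real.log (Real.sin x)) (Ioi 0) 0 := by
      unfold ContinuousWithinAt
      simpa using hsq
    exact (continuousWithinAt_Ioi_iff_Ici.mp h2).mono Icc_subset_Ici_self
  · have hs : 0 < Real.sin x := Real.sin_pos_of_pos_of_lt_pi h0 (by linarith [hx.2, pi_pos])
    exact (continuousAt_id.mul ((Real.continuousAt_log hs.ne').comp
      (Real.continuous_sin.continuousAt))).continuousWithinAt

theorem integral_x_cot : ∫ x in (0:ℝ)..(π/2), x * (Real.cos x / Real.sin x)
    = (π/2) * Real.log 2 := by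
  have hpi2 : (0:ℝ) < π/2 := by positivity
  have hFTC : ∫ x in (0:ℝ)..(π/2),
      (Real.log (Real.sin x) + x * (Real.cos x / Real.sin x)) = 0 := by
    have := intervalIntegral.integral_eq_sub_of_hasDeriv_right_of_le hpi2.le F_contOn
      (f' := fun x => Real.log (Real.sin x) + x * (Real.cos x / Real.sin x))
      (fun x hx => by
        have hs : 0 < Real.sin x := Real.sin_pos_of_pos_of_lt_pi hx.1 (by linarith [hx.2, pi_pos])
        have hlog : HasDerivAt (fun y => Real.log (Real.sin y)) ((Real.sin x)⁻¹ * Real.cos x) x :=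
          (Real.hasDerivAt_log hs.ne').comp x (Real.hasDerivAt_sin x)
        have hprod : HasDerivAt (fun y => y * Real.log (Real.sin y))
            (1 * Real.log (Real.sin x) + x * ((Real.sin x)⁻¹ * Real.cos x)) x :=
          (hasDerivAt_id x).mul hlog
        have : HasDerivAt (fun y => y * Real.log (Real.sin y))
            (Real.log (Real.sin x) + x * (Real.cos x / Real.sin x)) x := by
          convert hprod using 1
          field_simp
        exact this.hasDerivWithinAt)
      (intInt_logsin.add intInt_xcot)
    rw [this]
    simp
  have hsplit := intervalIntegral.integral_add intInt_logsin intInt_xcot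
  rw [hsplit, integral_logsin] at hFTC
  linarith
end

section
/- The integral ∫₀^{π/2} x / sin x dx equals 2G, where G is Catalan's constant. -/
open Real Set intervalIntegral MeasureTheory Filter Topology

noncomputable def hfun (t : ℝ) : ℝ := if t = 0 then 1 else Real.arctan t / t
noncomputable def gfun (x : ℝ) : ℝ := if x = 0 then 1 else x / Real.sin x


lemma hfun_cont : Continuous hfun := by
  rw [continuous_iff_continuousAt]
  intro t
  rcases eq_or_ne t 0 with rfl | ht
  · rw [← continuousWithinAt_compl_self]
    have hs : Tendsto (fun x : ℝ => Real.arctan x / x) (𝓝[≠] 0) (𝓝 1) := by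
      have h := (Real.hasDerivAt_arctan 0)
      rw [hasDerivAt_iff_tendsto_slope] at h
      have he : ∀ x : ℝ, slope Real.arctan 0 x = Real.arctan x / x := fun x => by
        rw [slope_def_field]; simp
      have := h.congr he
      simpa using this
    have : Tendsto hfun (𝓝[≠] 0) (𝓝 1) := by
      refine hs.congr' ?_
      filter_upwards [self_mem_nhdsWithin] with x hx
      have hx' : x ≠ 0 := hx
      simp [hfun, hx']
    simpa [ContinuousWithinAt, hfun] using this
  · have hc : ContinuousAt (fun x => Real.arctan x / x) t :=
      (Real.continuous_arctan.continuousAt).div continuousAt_id ht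
    refine hc.congr ?_
    filter_upwards [isOpen_ne.mem_nhds ht] with x hx
    have hx' : x ≠ 0 := hx
    simp [hfun, hx']

lemma gfun_contOn : ContinuousOn gfun (Icc 0 (π/2)) := by
  intro x hx
  rcases eq_or_ne x 0 with rfl | hx0
  · apply ContinuousAt.continuousWithinAt
    rw [← continuousWithinAt_compl_self]
    have hs : Tendsto (fun y : ℝ => Real.sin y / y) (𝓝[≠] 0) (𝓝 1) := by
      have h := Real.hasDerivAt_sin 0
      rw [hasDerivAt_iff_tendsto_slope] at h
      have he : ∀ y : ℝ, slope Real.sin 0 y = Real.sin y / y := fun y => by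
        rw [slope_def_field]; simp
      have := h.congr he
      simpa using this
    have h2 : Tendsto (fun y : ℝ => y / Real.sin y) (𝓝[≠] 0) (𝓝 1) := by
      have := (hs.inv₀ one_ne_zero)
      simpa [inv_div] using this
    have : Tendsto gfun (𝓝[≠] 0) (𝓝 1) := by
      refine h2.congr' ?_
      filter_upwards [self_mem_nhdsWithin] with y hy
      have hy' : y ≠ 0 := hy
      simp [gfun, hy']
    simpa [ContinuousWithinAt, gfun] using this
  · have hsin : Real.sin x ≠ 0 := by
      have h1 : 0 < x := lt_of_le_of_ne hx.1 (Ne.symm hx0)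
      have h2 : x < π := lt_of_le_of_lt hx.2 (by linarith [pi_pos])
      exact ne_of_gt (Real.sin_pos_of_pos_of_lt_pi h1 h2)
    have hc : ContinuousAt (fun y => y / Real.sin y) x :=
      continuousAt_id.div Real.continuous_sin.continuousAt hsin
    refine (hc.congr ?_).continuousWithinAt
    filter_upwards [isOpen_ne.mem_nhds hx0] with y hy
    have hy' : y ≠ 0 := hy
    simp [gfun, hy']



lemma sin_two_arctan (t : ℝ) : Real.sin (2 * Real.arctan t) = 2 * t / (1 + t^2) := by
  have h1 : (0:ℝ) ≤ 1 + t^2 := by positivity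
  rw [Real.sin_two_mul, Real.sin_arctan, Real.cos_arctan]
  have hs : (0:ℝ) < Real.sqrt (1 + t^2) := Real.sqrt_pos.mpr (by positivity)
  have hm : Real.sqrt (1+t^2) * Real.sqrt (1+t^2) = 1+t^2 := Real.mul_self_sqrt h1
  field_simp
  rw [Real.sq_sqrt h1]

lemma subst_step : ∫ x in (0:ℝ)..(π/2), x / Real.sin x = 2 * ∫ t in (0:ℝ)..1, hfun t := by
  have h0 : ∀ᵐ x : ℝ, x ≠ 0 := by
    have : (volume : Measure ℝ) {0} = 0 := measure_singleton 0
    simpa [ae_iff] using this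
  have h1 : ∫ x in (0:ℝ)..(π/2), x / Real.sin x = ∫ x in (0:ℝ)..(π/2), gfun x := by
    apply intervalIntegral.integral_congr_ae
    filter_upwards [h0] with x hx _
    simp [gfun, hx]
  have hderiv : ∀ t ∈ uIcc (0:ℝ) 1,
      HasDerivAt (fun t => 2 * Real.arctan t) (2 / (1 + t^2)) t := fun t _ => by
    exact ((Real.hasDerivAt_arctan t).const_mul 2).congr_deriv (by ring)
  have hcont' : ContinuousOn (fun t : ℝ => 2 / (1 + t^2)) (uIcc (0:ℝ) 1) := by
    apply ContinuousOn.div continuousOn_const (by fun_prop)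
    intro t _; positivity
  have himg : (fun t => 2 * Real.arctan t) '' (uIcc (0:ℝ) 1) ⊆ Icc 0 (π/2) := by
    rintro _ ⟨t, ht, rfl⟩
    rw [uIcc_of_le zero_le_one] at ht
    dsimp only
    constructor
    · have := Real.arctan_strictMono.monotone ht.1
      rw [Real.arctan_zero] at this
      linarith
    · have : Real.arctan t ≤ Real.arctan 1 := Real.arctan_strictMono.monotone ht.2
      rw [Real.arctan_one] at this
      linarith
  have hsub := integral_comp_smul_deriv' hderiv hcont' (gfun_contOn.mono himg)
  rw [Real.arctan_zero, Real.arctan_one, mul_zero] at hsub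
  have hpi : 2 * (π/4) = π/2 := by ring
  rw [hpi] at hsub
  rw [h1, ← hsub]
  rw [← intervalIntegral.integral_const_mul]
  apply integral_congr
  intro t ht
  rw [uIcc_of_le zero_le_one] at ht
  rcases eq_or_ne t 0 with rfl | ht0
  · simp [gfun, hfun]
  · have htpos : 0 < t := lt_of_le_of_ne ht.1 (Ne.symm ht0)
    have harc : 0 < Real.arctan t := by
      have := Real.arctan_strictMono htpos
      simpa using this
    have hne : 2 * Real.arctan t ≠ 0 := by positivity
    have h1t : (0:ℝ) < 1 + t^2 := by positivity
    simp only [Function.comp_apply, smul_eq_mul, gfun, hfun, if_neg hne, if_neg ht0,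
      sin_two_arctan]
    field_simp


lemma sum_summable : Summable fun n : ℕ => ((-1:ℝ))^n / (2*(n:ℝ)+1)^2 := by
  have h1 : Summable (fun n : ℕ => 1 / ((n:ℝ)+1) ^ 2) := by
    have h0 := Real.summable_one_div_nat_pow.mpr (le_refl 2)
    have h2 := (summable_nat_add_iff 1).mpr h0
    have : (fun n : ℕ => 1 / ((n:ℝ)+1) ^ 2) = fun n : ℕ => 1 / ((n+1 : ℕ):ℝ) ^ 2 := by
      funext n; push_cast; ring
    rw [this]; exact h2
  apply Summable.of_norm_bounded h1
  intro n
  rw [norm_div, norm_pow, norm_neg, norm_one, one_pow]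
  rw [norm_pow]
  have h2 : ((n:ℝ)+1) ≤ |2*(n:ℝ)+1| := by
    rw [abs_of_nonneg (by positivity)]
    linarith [Nat.cast_nonneg (α := ℝ) n]
  have h4 : ((n:ℝ)+1)^2 ≤ |2*(n:ℝ)+1|^2 :=
    pow_le_pow_left₀ (by positivity) h2 2
  exact one_div_le_one_div_of_le (by positivity) h4

-- remainder derivative
lemma deriv_remainder (N : ℕ) (t : ℝ) :
    HasDerivAt (fun t => Real.arctan t -
      ∑ n ∈ Finset.range N, ((-1:ℝ))^n * t^(2*n+1) / (2*(n:ℝ)+1))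
      (((-1:ℝ))^N * t^(2*N) / (1+t^2)) t := by
  have h1t : (1+t^2:ℝ) ≠ 0 := by positivity
  have h1 : HasDerivAt (fun t : ℝ => ∑ n ∈ Finset.range N,
      ((-1:ℝ))^n * t^(2*n+1) / (2*(n:ℝ)+1))
      (∑ n ∈ Finset.range N, ((-1:ℝ))^n * t^(2*n)) t := by
    apply HasDerivAt.fun_sum
    intro n _
    have hc : (2*(n:ℝ)+1) ≠ 0 := by positivity
    have h2 : HasDerivAt (fun y : ℝ => ((-1:ℝ))^n / (2*(n:ℝ)+1) * y^(2*n+1))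
        (((-1:ℝ))^n / (2*(n:ℝ)+1) * (((2*n+1 : ℕ) : ℝ) * t^(2*n+1-1))) t :=
      (hasDerivAt_pow (2*n+1) t).const_mul (((-1:ℝ))^n / (2*(n:ℝ)+1))
    show HasDerivAt (fun y : ℝ => ((-1:ℝ))^n * y^(2*n+1) / (2*(n:ℝ)+1)) (((-1:ℝ))^n * t^(2*n)) t
    convert h2 using 1
    · funext u; ring
    · push_cast
      field_simp
  have h : HasDerivAt (fun t => Real.arctan t -
      ∑ n ∈ Finset.range N, ((-1:ℝ))^n * t^(2*n+1) / (2*(n:ℝ)+1))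
      (1 / (1 + t^2) - ∑ n ∈ Finset.range N, ((-1:ℝ))^n * t^(2*n)) t :=
    (Real.hasDerivAt_arctan t).sub h1
  convert h using 1
  have hr : (-t^2 : ℝ) ≠ 1 := by nlinarith [sq_nonneg t]
  have hgeom := geom_sum_eq hr N
  have hterm : ∀ n ∈ Finset.range N, ((-1:ℝ))^n * t^(2*n) = (-t^2)^n := fun n _ => by
    rw [pow_mul, show (-t^2:ℝ) = (-1) * t^2 by ring, mul_pow]
  have hN : (-t^2 : ℝ)^N = ((-1:ℝ))^N * t^(2*N) := by
    rw [pow_mul, show (-t^2:ℝ) = (-1) * t^2 by ring, mul_pow]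
  rw [Finset.sum_congr rfl hterm, hgeom, hN]
  rw [show ((-t^2:ℝ) - 1) = -(1+t^2) by ring]
  rw [div_neg, sub_neg_eq_add, ← add_div]
  congr 1
  ring


lemma remainder_bound (N : ℕ) {t : ℝ} (ht0 : 0 ≤ t) :
    |Real.arctan t - ∑ n ∈ Finset.range N, ((-1:ℝ))^n * t^(2*n+1) / (2*(n:ℝ)+1)|
      ≤ t^(2*N+1) / (2*(N:ℝ)+1) := by
  set R : ℝ → ℝ := fun t => Real.arctan t -
    ∑ n ∈ Finset.range N, ((-1:ℝ))^n * t^(2*n+1)/(2*(n:ℝ)+1) with hR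
  have hcont : Continuous fun u : ℝ => ((-1:ℝ))^N * u^(2*N)/(1+u^2) := by
    apply Continuous.div (by fun_prop) (by fun_prop)
    intro u; positivity
  have hftc := intervalIntegral.integral_eq_sub_of_hasDerivAt
    (f := R) (a := 0) (b := t) (fun u _ => deriv_remainder N u)
    (hcont.intervalIntegrable 0 t)
  have hR0 : R 0 = 0 := by
    rw [hR]
    simp only [Real.arctan_zero]
    rw [Finset.sum_eq_zero, sub_zero]
    intro n _
    rw [zero_pow (by omega : 2*n+1 ≠ 0)]
    simp
  rw [hR0, sub_zero] at hftc
  have hae : ∀ᵐ u ∂(volume.restrict (Set.uIoc (0:ℝ) t)),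
      ‖((-1:ℝ))^N * u^(2*N)/(1+u^2)‖ ≤ u^(2*N) := by
    apply ae_of_all
    intro u
    have hu2 : (0:ℝ) ≤ u^(2*N) := by
      rw [pow_mul]; exact pow_nonneg (sq_nonneg u) N
    have h1u : (0:ℝ) < 1 + u^2 := by positivity
    have habs : |((-1:ℝ))^N| = 1 := by rw [abs_pow, abs_neg, abs_one, one_pow]
    rw [Real.norm_eq_abs, abs_div, abs_mul, habs, one_mul, abs_of_nonneg hu2, abs_of_pos h1u]
    exact div_le_self hu2 (by nlinarith)
  have hb := intervalIntegral.norm_integral_le_abs_of_norm_le hae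
    ((continuous_pow (2*N)).intervalIntegrable 0 t)
  rw [hftc, Real.norm_eq_abs] at hb
  have hg : ∫ u in (0:ℝ)..t, u^(2*N) = t^(2*N+1)/(2*(N:ℝ)+1) := by
    rw [integral_pow, zero_pow (by omega : 2*N+1 ≠ 0), sub_zero]
    congr 1
    push_cast
    ring
  rw [hg] at hb
  rwa [abs_of_nonneg (div_nonneg (pow_nonneg ht0 _) (by positivity))] at hb


lemma integral_hfun : ∫ t in (0:ℝ)..1, hfun t = ∑' n : ℕ, ((-1:ℝ))^n / (2*(n:ℝ)+1)^2 := by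
  have hbound : ∀ N : ℕ,
      |(∫ t in (0:ℝ)..1, hfun t) - ∑ n ∈ Finset.range N, ((-1:ℝ))^n / (2*(n:ℝ)+1)^2|
        ≤ 1/((N:ℝ)+1) := by
    intro N
    set p : ℝ → ℝ := fun t => ∑ n ∈ Finset.range N, ((-1:ℝ))^n * t^(2*n) / (2*(n:ℝ)+1)
      with hp
    have hpc : Continuous p := by
      rw [hp]; apply continuous_finset_sum; intro n _; fun_prop
    have hip : ∫ t in (0:ℝ)..1, p t
        = ∑ n ∈ Finset.range N, ((-1:ℝ))^n / (2*(n:ℝ)+1)^2 := by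
      rw [hp, intervalIntegral.integral_finset_sum]
      · apply Finset.sum_congr rfl
        intro n _
        rw [show (fun t : ℝ => ((-1:ℝ))^n * t^(2*n) / (2*(n:ℝ)+1))
            = fun t : ℝ => (((-1:ℝ))^n / (2*(n:ℝ)+1)) * t^(2*n) from funext fun t => by ring]
        rw [intervalIntegral.integral_const_mul, integral_pow, one_pow,
          zero_pow (by omega : 2*n+1 ≠ 0), sub_zero]
        have hc : ((2*n : ℕ) : ℝ) + 1 = 2*(n:ℝ)+1 := by push_cast; ring
        rw [hc]
        have hne : (2*(n:ℝ)+1) ≠ 0 := by positivity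
        field_simp
      · intro n _
        exact (by fun_prop :
          Continuous fun t : ℝ => ((-1:ℝ))^n * t^(2*n) / (2*(n:ℝ)+1)).intervalIntegrable 0 1
    have hsub : (∫ t in (0:ℝ)..1, hfun t) - ∫ t in (0:ℝ)..1, p t
        = ∫ t in (0:ℝ)..1, (hfun t - p t) :=
      (intervalIntegral.integral_sub (hfun_cont.intervalIntegrable 0 1)
        (hpc.intervalIntegrable 0 1)).symm
    have hae : ∀ᵐ u ∂(volume.restrict (Set.uIoc (0:ℝ) 1)),
        ‖hfun u - p u‖ ≤ u^(2*N) / (2*(N:ℝ)+1) := by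
      filter_upwards [ae_restrict_mem measurableSet_uIoc] with u hu
      rw [Set.uIoc_of_le zero_le_one] at hu
      have hu0 : 0 < u := hu.1
      have hne : u ≠ 0 := ne_of_gt hu0
      have hps : p u = (∑ n ∈ Finset.range N, ((-1:ℝ))^n * u^(2*n+1)/(2*(n:ℝ)+1)) / u := by
        rw [hp, Finset.sum_div]
        apply Finset.sum_congr rfl
        intro n _
        rw [pow_succ]
        field_simp
      rw [hfun, if_neg hne, hps, div_sub_div_same, Real.norm_eq_abs, abs_div, abs_of_pos hu0]
      have hb := remainder_bound N (le_of_lt hu0)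
      calc |Real.arctan u - ∑ n ∈ Finset.range N, ((-1:ℝ))^n * u^(2*n+1)/(2*(n:ℝ)+1)| / u
          ≤ (u^(2*N+1) / (2*(N:ℝ)+1)) / u := (div_le_div_iff_of_pos_right hu0).mpr hb
        _ = u^(2*N) / (2*(N:ℝ)+1) := by rw [pow_succ]; field_simp
    have hgc : Continuous (fun u : ℝ => u^(2*N)/(2*(N:ℝ)+1)) := by fun_prop
    have hkey := intervalIntegral.norm_integral_le_abs_of_norm_le hae (hgc.intervalIntegrable 0 1)
    rw [← hsub] at hkey
    have hg : ∫ u in (0:ℝ)..1, u^(2*N)/(2*(N:ℝ)+1) = 1/((2*(N:ℝ)+1)^2) := by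
      rw [show (fun u:ℝ => u^(2*N)/(2*(N:ℝ)+1))
          = fun u:ℝ => (1/(2*(N:ℝ)+1)) * u^(2*N) from funext fun u => by ring]
      rw [intervalIntegral.integral_const_mul, integral_pow, one_pow,
        zero_pow (by omega : 2*N+1 ≠ 0), sub_zero]
      have hc : ((2*N : ℕ) : ℝ) + 1 = 2*(N:ℝ)+1 := by push_cast; ring
      rw [hc]
      have hne : (2*(N:ℝ)+1) ≠ 0 := by positivity
      field_simp
    rw [hg] at hkey
    rw [hip] at hkey
    rw [Real.norm_eq_abs] at hkey
    refine hkey.trans ?_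
    rw [abs_of_nonneg (by positivity)]
    rw [div_le_div_iff₀ (by positivity) (by positivity)]
    nlinarith [Nat.cast_nonneg (α := ℝ) N]
  have htend0 : Tendsto (fun N : ℕ => (∫ t in (0:ℝ)..1, hfun t)
      - ∑ n ∈ Finset.range N, ((-1:ℝ))^n/(2*(n:ℝ)+1)^2) atTop (𝓝 0) := by
    apply squeeze_zero_norm (fun N => by simpa using hbound N)
      tendsto_one_div_add_atTop_nhds_zero_nat
  have htend : Tendsto (fun N : ℕ => ∑ n ∈ Finset.range N, ((-1:ℝ))^n/(2*(n:ℝ)+1)^2)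
      atTop (𝓝 (∫ t in (0:ℝ)..1, hfun t)) := by
    have := (tendsto_const_nhds (x := ∫ t in (0:ℝ)..1, hfun t)
      (f := atTop (α := ℕ))).sub htend0
    simpa using this
  exact tendsto_nhds_unique htend sum_summable.hasSum.tendsto_sum_nat

theorem integral_x_div_sin :
    ∫ x in (0:ℝ)..(π/2), x / Real.sin x
      = 2 * ∑' n : ℕ, (-1 : ℝ)^n / (2*(n:ℝ)+1)^2 := by
  rw [subst_step, integral_hfun]
end

section
/- The integral ∫₀^{π/2} x² / sin x dx equals 2πG − (7/2)ζ(3). -/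
open Real Filter MeasureTheory Finset Set Topology

noncomputable def gg : ℝ → ℝ := fun x => x^2 / Real.sin x

lemma tele (x : ℝ) (N : ℕ) :
    1 - Real.cos (2*N*x) = ∑ k ∈ Finset.range N, 2 * Real.sin x * Real.sin ((2*k+1)*x) := by
  induction N with
  | zero => simp
  | succ n ih =>
    rw [Finset.sum_range_succ, ← ih]
    have h := Real.cos_sub_cos (2*n*x) (2*(n+1:ℕ)*x)
    have h1 : (2*(n:ℝ)*x + 2*(n+1:ℕ)*x)/2 = (2*n+1)*x := by push_cast; ring
    have h2 : (2*(n:ℝ)*x - 2*(n+1:ℕ)*x)/2 = -x := by push_cast; ring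
    rw [h1, h2, Real.sin_neg] at h
    push_cast at h ⊢
    nlinarith [h]

lemma sin_odd_pi_div_two (k : ℕ) : Real.sin ((2*k+1)*(π/2)) = (-1)^k := by
  have : (2*(k:ℝ)+1)*(π/2) = π/2 + k*π := by ring
  rw [this, Real.sin_add_nat_mul_pi, Real.sin_pi_div_two, mul_one]

lemma cos_odd_pi_div_two (k : ℕ) : Real.cos ((2*k+1)*(π/2)) = 0 := by
  have : (2*(k:ℝ)+1)*(π/2) = π/2 + k*π := by ring
  rw [this, Real.cos_add_nat_mul_pi, Real.cos_pi_div_two, mul_zero]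

lemma antider (m x : ℝ) (hm : m ≠ 0) :
    HasDerivAt (fun y : ℝ => 2*y*Real.sin (m*y)/m^2 + (2/m^3 - y^2/m)*Real.cos (m*y))
      (x^2 * Real.sin (m*x)) x := by
  have hs : HasDerivAt (fun y : ℝ => Real.sin (m*y)) (m * Real.cos (m*x)) x := by
    simpa [mul_comm, Function.comp_def] using (Real.hasDerivAt_sin (m*x)).comp x ((hasDerivAt_id x).const_mul m)
  have hc : HasDerivAt (fun y : ℝ => Real.cos (m*y)) (-(m * Real.sin (m*x))) x := by
    have := (Real.hasDerivAt_cos (m*x)).comp x ((hasDerivAt_id x).const_mul m)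
    simpa [mul_comm, Function.comp_def] using this
  have h1 : HasDerivAt (fun y : ℝ => 2*y*Real.sin (m*y)/m^2)
      ((2*Real.sin (m*x) + 2*x*(m*Real.cos (m*x)))/m^2) x := by
    have := (((hasDerivAt_id x).const_mul 2).mul hs)
    simpa [div_eq_mul_inv, mul_comm, mul_assoc] using this.div_const (m^2)
  have h2 : HasDerivAt (fun y : ℝ => (2/m^3 - y^2/m)*Real.cos (m*y))
      ((-(2*x/m))*Real.cos (m*x) + (2/m^3 - x^2/m)*(-(m*Real.sin (m*x)))) x := by
    have hp : HasDerivAt (fun y : ℝ => 2/m^3 - y^2/m) (-(2*x/m)) x := by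
      have := ((hasDerivAt_pow 2 x).div_const m).const_sub (2/m^3)
      simpa [mul_comm] using this
    exact hp.mul hc
  have := h1.add h2
  convert this using 1
  all_goals first | rfl | (field_simp; ring)

lemma bint (k : ℕ) :
    ∫ x in (0:ℝ)..(π/2), x^2 * Real.sin ((2*k+1)*x)
      = π*(-1)^k/(2*(k:ℝ)+1)^2 - 2/(2*(k:ℝ)+1)^3 := by
  set m : ℝ := 2*(k:ℝ)+1 with hm
  have hm0 : m ≠ 0 := by positivity
  rw [intervalIntegral.integral_eq_sub_of_hasDerivAt
      (f := fun y : ℝ => 2*y*Real.sin (m*y)/m^2 + (2/m^3 - y^2/m)*Real.cos (m*y))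
      (fun x _ => antider m x hm0) ?_]
  · rw [show m*(π/2) = (2*k+1)*(π/2) by rw [hm], sin_odd_pi_div_two, cos_odd_pi_div_two]
    simp
    ring
  · apply Continuous.intervalIntegrable
    continuity

lemma gg_meas : Measurable gg := by unfold gg; fun_prop

lemma gg_bound {x : ℝ} (hx : x ∈ Set.Ioc 0 (π/2)) : |gg x| ≤ π^2/4 := by
  obtain ⟨h0, h1⟩ := hx
  have hs : 2/π * x ≤ Real.sin x := Real.mul_le_sin h0.le h1
  have hsp : 0 < Real.sin x := lt_of_lt_of_le (by positivity) hs
  unfold gg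
  rw [abs_of_nonneg (div_nonneg (sq_nonneg x) hsp.le)]
  rw [div_le_iff₀ hsp]
  calc x^2 = x * x := sq x
    _ ≤ (π/2) * x := by nlinarith
    _ = (π^2/4) * (2/π * x) := by field_simp; ring
    _ ≤ π^2/4 * Real.sin x := by nlinarith [Real.pi_pos]

lemma gg_integrableOn : IntegrableOn gg (Set.Ioc 0 (π/2)) := by
  apply Measure.integrableOn_of_bounded (M := π^2/4) (by simp) gg_meas.aestronglyMeasurable
  filter_upwards [ae_restrict_mem measurableSet_Ioc] with x hx
  simpa using gg_bound hx

lemma ggcos_integrableOn (N : ℕ) :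
    IntegrableOn (fun x => gg x * Real.cos (2*N*x)) (Set.Ioc 0 (π/2)) := by
  apply Measure.integrableOn_of_bounded (M := π^2/4) (by simp)
    ((gg_meas.mul (by fun_prop)).aestronglyMeasurable)
  filter_upwards [ae_restrict_mem measurableSet_Ioc] with x hx
  rw [Real.norm_eq_abs, Pi.mul_apply, abs_mul]
  calc |gg x| * |Real.cos (2*N*x)| ≤ (π^2/4) * 1 :=
        mul_le_mul (gg_bound hx) (Real.abs_cos_le_one _) (abs_nonneg _) (by positivity)
    _ = π^2/4 := mul_one _

lemma riemann_lebesgue :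
    Tendsto (fun N : ℕ => ∫ x in (0:ℝ)..(π/2), gg x * Real.cos (2*N*x)) atTop (𝓝 0) := by
  set fc : ℝ → ℂ := Set.indicator (Set.Ioc 0 (π/2)) (fun x => (gg x : ℂ)) with hfc
  have hw : Tendsto (fun N : ℕ => -(N:ℝ)/π) atTop (Filter.cocompact ℝ) := by
    rw [cocompact_eq_atBot_atTop]
    refine Tendsto.mono_right ?_ le_sup_left
    exact Tendsto.atBot_div_const Real.pi_pos
      (tendsto_neg_atBot_iff.mpr tendsto_natCast_atTop_atTop)
  have L := (Real.tendsto_integral_exp_smul_cocompact fc).comp hw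
  have L2 := (Complex.continuous_re.tendsto 0).comp L
  simp only [Complex.zero_re] at L2
  convert L2 using 2 with N
  show (∫ x in (0:ℝ)..(π/2), gg x * Real.cos (2*N*x))
      = (∫ v : ℝ, (Real.fourierChar (-(v * (-(N:ℝ)/π))) : ℂ) • fc v).re
  have hind : (fun v : ℝ => (Real.fourierChar (-(v * (-(N:ℝ)/π))) : ℂ) • fc v)
      = Set.indicator (Set.Ioc 0 (π/2))
          (fun v => Complex.exp ((2*N*v : ℝ) * Complex.I) * (gg v : ℂ)) := by
    funext v
    by_cases hv : v ∈ Set.Ioc 0 (π/2)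
    · rw [hfc, Set.indicator_of_mem hv, Set.indicator_of_mem hv, smul_eq_mul,
        Real.fourierChar_apply]
      congr 2
      push_cast
      have hpi : (π:ℂ) ≠ 0 := Complex.ofReal_ne_zero.mpr Real.pi_ne_zero
      field_simp
    · rw [hfc, Set.indicator_of_notMem hv, Set.indicator_of_notMem hv, smul_zero]
  rw [hind, MeasureTheory.integral_indicator measurableSet_Ioc]
  have hInt : IntegrableOn (fun v => Complex.exp ((2*N*v : ℝ) * Complex.I) * (gg v : ℂ))
      (Set.Ioc 0 (π/2)) := by
    have hcont : Continuous fun v : ℝ => Complex.exp ((2*N*v : ℝ) * Complex.I) :=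
      Complex.continuous_exp.comp ((Complex.continuous_ofReal.comp
        (continuous_const.mul continuous_id)).mul continuous_const)
    refine Measure.integrableOn_of_bounded (M := π^2/4) (by simp)
      (hcont.aestronglyMeasurable.mul
        ((Complex.measurable_ofReal.comp gg_meas).aestronglyMeasurable)) ?_
    filter_upwards [ae_restrict_mem measurableSet_Ioc] with x hx
    rw [norm_mul, Complex.norm_exp_ofReal_mul_I, one_mul, Complex.norm_real, Real.norm_eq_abs]
    exact gg_bound hx
  have h3 := integral_re hInt
  simp only [RCLike.re_to_complex] at h3
  rw [intervalIntegral.integral_of_le (by positivity : (0:ℝ) ≤ π/2), ← h3]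
  apply setIntegral_congr_fun measurableSet_Ioc
  intro v _
  simp only [Complex.mul_re, Complex.exp_ofReal_mul_I_re, Complex.exp_ofReal_mul_I_im,
    Complex.ofReal_re, Complex.ofReal_im, mul_zero, sub_zero]
  ring

lemma pointwise_id (N : ℕ) {x : ℝ} (hx : x ∈ Set.Icc (0:ℝ) (π/2)) :
    gg x = (∑ k ∈ Finset.range N, 2*x^2*Real.sin ((2*k+1)*x)) + gg x * Real.cos (2*N*x) := by
  obtain ⟨h0, h1⟩ := hx
  rcases eq_or_lt_of_le h0 with h|h
  · subst h
    simp [gg]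
  · have hs : 0 < Real.sin x := Real.sin_pos_of_pos_of_lt_pi h
      (lt_of_le_of_lt h1 (by linarith [Real.pi_pos]))
    have key : gg x * (1 - Real.cos (2*N*x))
        = ∑ k ∈ Finset.range N, 2*x^2*Real.sin ((2*k+1)*x) := by
      rw [tele x N, Finset.mul_sum]
      apply Finset.sum_congr rfl
      intro k _
      unfold gg
      field_simp
    nlinarith [key]

lemma split (N : ℕ) :
    (∫ x in (0:ℝ)..(π/2), gg x)
      = (∑ k ∈ Finset.range N, 2 * ∫ x in (0:ℝ)..(π/2), x^2 * Real.sin ((2*k+1)*x))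
        + ∫ x in (0:ℝ)..(π/2), gg x * Real.cos (2*N*x) := by
  have hle : (0:ℝ) ≤ π/2 := by positivity
  have hgc : IntervalIntegrable (fun x => gg x * Real.cos (2*N*x)) volume 0 (π/2) :=
    (intervalIntegrable_iff_integrableOn_Ioc_of_le hle).mpr (ggcos_integrableOn N)
  have hsum : IntervalIntegrable
      (fun x => ∑ k ∈ Finset.range N, 2*x^2*Real.sin ((2*k+1)*x)) volume 0 (π/2) := by
    apply Continuous.intervalIntegrable
    continuity
  have h1 : (∫ x in (0:ℝ)..(π/2), gg x)
      = ∫ x in (0:ℝ)..(π/2),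
          ((∑ k ∈ Finset.range N, 2*x^2*Real.sin ((2*k+1)*x)) + gg x * Real.cos (2*N*x)) := by
    apply intervalIntegral.integral_congr
    intro x hx
    rw [Set.uIcc_of_le hle] at hx
    exact pointwise_id N hx
  rw [h1, intervalIntegral.integral_add hsum hgc]
  congr 1
  rw [intervalIntegral.integral_finset_sum (fun k _ => by
    apply Continuous.intervalIntegrable; continuity)]
  apply Finset.sum_congr rfl
  intro k _
  rw [← intervalIntegral.integral_const_mul]
  apply intervalIntegral.integral_congr
  intro x _
  ring

lemma summable_odd_pow (p : ℕ) (hp : 1 < p) :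
    Summable (fun k : ℕ => 1/(2*(k:ℝ)+1)^p) := by
  have h0 : Summable (fun n : ℕ => 1/((n:ℝ))^p) := by
    rw [Real.summable_one_div_nat_pow]; exact hp
  have h1 : Summable (fun n : ℕ => 1/(((n+1:ℕ)):ℝ)^p) := (summable_nat_add_iff 1).mpr h0
  apply Summable.of_nonneg_of_le (fun k => by positivity) _ h1
  intro k
  have hk : (0:ℝ) ≤ (k:ℝ) := Nat.cast_nonneg k
  have hb : (((k+1:ℕ)):ℝ)^p ≤ (2*(k:ℝ)+1)^p := by
    apply pow_le_pow_left₀ (by positivity)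
    push_cast; linarith
  exact one_div_le_one_div_of_le (by positivity) hb

lemma summable_alt : Summable (fun k : ℕ => (-1:ℝ)^k/(2*(k:ℝ)+1)^2) := by
  apply Summable.of_abs
  have := summable_odd_pow 2 one_lt_two
  apply this.congr
  intro k
  rw [abs_div, abs_pow, abs_neg, abs_one, one_pow, abs_of_nonneg (by positivity)]

noncomputable def G : ℝ := ∑' n : ℕ, (-1 : ℝ)^n / (2*(n:ℝ)+1)^2
noncomputable def T : ℝ := ∑' k : ℕ, 1/(2*(k:ℝ)+1)^3
noncomputable def Z : ℝ := ∑' n : ℕ, 1/((n:ℝ))^3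

lemma hZsum : Summable (fun n : ℕ => 1/((n:ℝ))^3) := by
  rw [Real.summable_one_div_nat_pow]; norm_num

lemma even_rewrite : (fun k : ℕ => 1/(((2*k:ℕ)):ℝ)^3) = fun k : ℕ => (1/8) * (1/((k:ℝ))^3) := by
  funext k
  push_cast
  rw [show (2*(k:ℝ))^3 = 8*(k:ℝ)^3 by ring, ← one_div_mul_one_div]

lemma odd_cast (k : ℕ) : 1/(((2*k+1:ℕ)):ℝ)^3 = 1/(2*(k:ℝ)+1)^3 := by norm_cast

lemma T_eq : T = 7/8 * Z := by
  have hs3 : Summable (fun k : ℕ => 1/(2*(k:ℝ)+1)^3) := summable_odd_pow 3 (by norm_num)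
  have hso : Summable (fun k : ℕ => 1/(((2*k+1:ℕ)):ℝ)^3) := by
    apply hs3.congr; intro k; rw [odd_cast]
  have hse : Summable (fun k : ℕ => 1/(((2*k:ℕ)):ℝ)^3) := by
    rw [even_rewrite]; exact hZsum.mul_left _
  have h := tsum_even_add_odd (f := fun n : ℕ => 1/((n:ℝ))^3) hse hso
  have he : (∑' k : ℕ, 1/(((2*k:ℕ)):ℝ)^3) = (1/8) * Z := by
    rw [even_rewrite, tsum_mul_left]
    unfold Z
    rfl
  have ho : (∑' k : ℕ, 1/(((2*k+1:ℕ)):ℝ)^3) = T := by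
    unfold T; exact tsum_congr odd_cast
  rw [he, ho] at h
  unfold Z at *
  linarith [h]

lemma zeta3 : riemannZeta 3 = (Z : ℂ) := by
  have h := zeta_nat_eq_tsum_of_gt_one (k := 3) (by norm_num)
  norm_num at h
  rw [h]
  unfold Z
  rw [Complex.ofReal_tsum]
  apply tsum_congr
  intro n
  push_cast
  norm_num

lemma key_real : (∫ x in (0:ℝ)..(π/2), gg x) = 2*π*G - 4*T := by
  have h1 : HasSum (fun k : ℕ => (-1:ℝ)^k/(2*(k:ℝ)+1)^2) G := summable_alt.hasSum
  have h2 : HasSum (fun k : ℕ => 1/(2*(k:ℝ)+1)^3) T :=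
    (summable_odd_pow 3 (by norm_num)).hasSum
  have hb : HasSum (fun k : ℕ => 2 * (π*(-1)^k/(2*(k:ℝ)+1)^2 - 2/(2*(k:ℝ)+1)^3))
      (2*π*G - 4*T) := by
    have := (h1.mul_left (2*π)).sub (h2.mul_left 4)
    convert this using 2 with k
    all_goals first | rfl | ring
  have hS := hb.tendsto_sum_nat
  have hcomb := hS.add riemann_lebesgue
  rw [add_zero] at hcomb
  have heq : (fun N : ℕ =>
      (∑ k ∈ Finset.range N, 2 * (π*(-1)^k/(2*(k:ℝ)+1)^2 - 2/(2*(k:ℝ)+1)^3))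
        + ∫ x in (0:ℝ)..(π/2), gg x * Real.cos (2*N*x))
      = fun _ : ℕ => (∫ x in (0:ℝ)..(π/2), gg x) := by
    funext N
    rw [split N]
    congr 1
    apply Finset.sum_congr rfl
    intro k _
    rw [bint k]
  rw [heq] at hcomb
  exact tendsto_nhds_unique tendsto_const_nhds hcomb

theorem integral_x_sq_div_sin :
    ((∫ x in (0:ℝ)..(π/2), x^2 / Real.sin x : ℝ) : ℂ)
      = 2 * (π : ℂ) * ((∑' n : ℕ, (-1 : ℝ)^n / (2*(n:ℝ)+1)^2 : ℝ) : ℂ)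
        - (7/2) * riemannZeta 3 := by
  have hI : (∫ x in (0:ℝ)..(π/2), x^2 / Real.sin x : ℝ) = 2*π*G - 4*T := key_real
  rw [hI, T_eq, zeta3]
  show ((2*π*G - 4*(7/8*Z) : ℝ) : ℂ) = 2 * (π:ℂ) * (G : ℂ) - (7/2) * (Z:ℂ)
  push_cast
  ring
end

section
/- ∫₀^{π/2} x·(π − x)/sin x dx = (7/2)ζ(3). -/
open Real

/-- Evaluation of the third Bernoulli polynomial. -/
lemma bern3_eval (x : ℝ) : (Polynomial.map (algebraMap ℚ ℝ) (Polynomial.bernoulli 3)).eval x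
    = x^3 - 3/2*x^2 + 1/2*x := by
  have h3 : bernoulli 3 = 0 := by norm_num [bernoulli]
  have h2 : bernoulli 2 = 1/6 := by norm_num [bernoulli]
  simp [Polynomial.bernoulli, Finset.sum_range_succ, h2, h3, bernoulli_one]
  ring

/-- The Fourier sine series `∑ sin(2πnx)/n³` for `x ∈ [0,1]`. -/
lemma hasSum_sin3 {x : ℝ} (hx : x ∈ Set.Icc (0:ℝ) 1) :
    HasSum (fun n : ℕ => 1 / (n : ℝ) ^ 3 * Real.sin (2 * π * n * x))
      ((2*π)^3/12 * (x^3 - 3/2*x^2 + 1/2*x)) := by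
  have h := hasSum_one_div_nat_pow_mul_sin (k := 1) one_ne_zero hx
  rw [show 2*1+1 = 3 from rfl, bern3_eval] at h
  convert h using 1
  have h6 : ((Nat.factorial 3 : ℕ) : ℝ) = 6 := by norm_num [Nat.factorial]
  rw [h6]
  ring

/-- The odd sine series `∑ sin((2k+1)θ)/(2k+1)³ = (π/8)·θ(π−θ)` for `θ ∈ [0, π/2]`. -/
lemma hasSum_odd_sin3 {θ : ℝ} (h0 : 0 ≤ θ) (h1 : θ ≤ π/2) :
    HasSum (fun k : ℕ => Real.sin ((2*k+1) * θ) / (2*k+1:ℝ) ^ 3)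
      (π/8 * (θ * (π - θ))) := by
  have hπ : (0:ℝ) < π := Real.pi_pos
  have hπ' : π ≠ 0 := ne_of_gt hπ
  set f : ℕ → ℝ := fun n => 1 / (n : ℝ) ^ 3 * Real.sin ((n:ℝ) * θ) with hf
  have hA : HasSum f ((2*π)^3/12 * ((θ/(2*π))^3 - 3/2*(θ/(2*π))^2 + 1/2*(θ/(2*π)))) := by
    have hx : θ/(2*π) ∈ Set.Icc (0:ℝ) 1 := by
      constructor
      · positivity
      · rw [div_le_one (by positivity)]; nlinarith
    refine (hasSum_sin3 hx).congr_fun fun n => ?_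
    rw [hf, show 2 * π * (n:ℝ) * (θ/(2*π)) = (n:ℝ) * θ by field_simp]
  have hE : HasSum (fun m : ℕ => f (2*m))
      ((2*π)^3/12 * ((θ/π)^3 - 3/2*(θ/π)^2 + 1/2*(θ/π)) / 8) := by
    have hx : θ/π ∈ Set.Icc (0:ℝ) 1 := by
      constructor
      · positivity
      · rw [div_le_one hπ]; linarith
    refine ((hasSum_sin3 hx).div_const 8).congr_fun fun m => ?_
    have harg : 2 * π * (m:ℝ) * (θ/π) = ((2*m:ℕ):ℝ) * θ := by push_cast; field_simp
    show 1 / ((2*m:ℕ):ℝ)^3 * Real.sin (((2*m:ℕ):ℝ) * θ) = 1/(m:ℝ)^3 * Real.sin (2*π*m*(θ/π)) / 8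
    rw [← harg]
    push_cast
    ring
  have hinj : Function.Injective (fun k : ℕ => 2*k+1) := fun a b h => by
    simp only [] at h; omega
  have hOsum : Summable (fun k : ℕ => f (2*k+1)) := hA.summable.comp_injective hinj
  have hO : HasSum (fun k : ℕ => f (2*k+1)) (∑' k, f (2*k+1)) := hOsum.hasSum
  have htot := hE.even_add_odd hO
  have huniq := htot.unique hA
  have hval : ∑' k, f (2*k+1) = π/8 * (θ * (π - θ)) := by
    have : ∑' k, f (2*k+1)
        = (2*π)^3/12 * ((θ/(2*π))^3 - 3/2*(θ/(2*π))^2 + 1/2*(θ/(2*π)))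
          - (2*π)^3/12 * ((θ/π)^3 - 3/2*(θ/π)^2 + 1/2*(θ/π)) / 8 := by linarith
    rw [this]
    field_simp
    ring
  rw [hval] at hO
  refine hO.congr_fun fun k => ?_
  rw [hf]
  push_cast
  ring

/-- `|sin(nx)| ≤ n·|sin x|`. -/
lemma abs_sin_nat_mul_le (n : ℕ) (x : ℝ) : |Real.sin (n * x)| ≤ n * |Real.sin x| := by
  induction n with
  | zero => simp
  | succ n ih =>
    have harg : ((n:ℝ)+1) * x = (n:ℝ)*x + x := by ring
    have hc1 : |Real.cos x| ≤ 1 := Real.abs_cos_le_one x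
    have hc2 : |Real.cos ((n:ℝ)*x)| ≤ 1 := Real.abs_cos_le_one _
    push_cast
    rw [harg, Real.sin_add]
    calc |Real.sin ((n:ℝ)*x) * Real.cos x + Real.cos ((n:ℝ)*x) * Real.sin x|
        ≤ |Real.sin ((n:ℝ)*x) * Real.cos x| + |Real.cos ((n:ℝ)*x) * Real.sin x| := abs_add_le _ _
      _ = |Real.sin ((n:ℝ)*x)| * |Real.cos x| + |Real.cos ((n:ℝ)*x)| * |Real.sin x| := by
          rw [abs_mul, abs_mul]
      _ ≤ ((n:ℝ)+1) * |Real.sin x| := by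
          nlinarith [abs_nonneg (Real.sin ((n:ℝ)*x)), abs_nonneg (Real.sin x),
            abs_nonneg (Real.cos x), abs_nonneg (Real.cos ((n:ℝ)*x))]

/-- The Dirichlet-type quotient is bounded. -/
lemma abs_dirichlet_le (n : ℕ) (x : ℝ) : |Real.sin (n * x) / Real.sin x| ≤ n := by
  rcases eq_or_ne (Real.sin x) 0 with h | h
  · simp [h]
  · rw [abs_div, div_le_iff₀ (abs_pos.mpr h)]
    exact abs_sin_nat_mul_le n x

lemma dirichlet_integrable (n : ℕ) :
    IntervalIntegrable (fun x => Real.sin (n * x) / Real.sin x) MeasureTheory.volume 0 (π/2) := by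
  have hπ : (0:ℝ) < π := Real.pi_pos
  rw [intervalIntegrable_iff, Set.uIoc_of_le (by positivity)]
  have hm : MeasureTheory.AEStronglyMeasurable (fun x => Real.sin ((n:ℝ) * x) / Real.sin x)
      (MeasureTheory.volume.restrict (Set.Ioc (0:ℝ) (π/2))) :=
    ((Real.continuous_sin.comp (continuous_const.mul continuous_id)).measurable.div
      Real.continuous_sin.measurable).aestronglyMeasurable
  have hconst : MeasureTheory.IntegrableOn (fun _ : ℝ => (n:ℝ)) (Set.Ioc (0:ℝ) (π/2))
      MeasureTheory.volume :=
    (MeasureTheory.integrableOn_const_iff).mpr (Or.inr (by rw [Real.volume_Ioc]; exact ENNReal.ofReal_lt_top))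
  refine MeasureTheory.Integrable.mono' hconst hm ?_
  filter_upwards with x
  exact abs_dirichlet_le n x

/-- Key integral: `∫₀^{π/2} sin((2k+1)x)/sin x dx = π/2`. -/
lemma integral_dirichlet (k : ℕ) :
    ∫ x in (0:ℝ)..(π/2), Real.sin ((2*k+1:ℕ) * x) / Real.sin x = π/2 := by
  have hπ : (0:ℝ) < π := Real.pi_pos
  induction k with
  | zero =>
    have h : ∀ᵐ x ∂MeasureTheory.volume, x ∈ Set.uIoc (0:ℝ) (π/2) →
        Real.sin ((2*0+1:ℕ) * x) / Real.sin x = 1 := by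
      filter_upwards with x hx
      rw [Set.uIoc_of_le (by positivity)] at hx
      have hs : Real.sin x ≠ 0 := ne_of_gt (Real.sin_pos_of_pos_of_lt_pi hx.1
        (lt_of_le_of_lt hx.2 (by linarith)))
      rw [show ((2*0+1:ℕ):ℝ) = 1 by norm_num, one_mul, div_self hs]
    rw [intervalIntegral.integral_congr_ae h]
    simp
  | succ k ih =>
    have key : (∫ x in (0:ℝ)..(π/2), Real.sin ((2*(k+1)+1:ℕ) * x) / Real.sin x)
        - ∫ x in (0:ℝ)..(π/2), Real.sin ((2*k+1:ℕ) * x) / Real.sin x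
        = ∫ x in (0:ℝ)..(π/2), 2 * Real.cos ((2*(k:ℝ)+2) * x) := by
      rw [← intervalIntegral.integral_sub (dirichlet_integrable _) (dirichlet_integrable _)]
      apply intervalIntegral.integral_congr_ae
      filter_upwards with x hx'
      rw [Set.uIoc_of_le (by positivity)] at hx'
      have hs : Real.sin x ≠ 0 := ne_of_gt (Real.sin_pos_of_pos_of_lt_pi hx'.1
        (lt_of_le_of_lt hx'.2 (by linarith)))
      rw [div_sub_div_same, Real.sin_sub_sin]
      have e1 : (((2*(k+1)+1:ℕ):ℝ) * x - ((2*k+1:ℕ):ℝ) * x) / 2 = x := by push_cast; ring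
      have e2 : (((2*(k+1)+1:ℕ):ℝ) * x + ((2*k+1:ℕ):ℝ) * x) / 2 = (2*(k:ℝ)+2) * x := by
        push_cast; ring
      rw [e1, e2]
      field_simp
    have hzero : (∫ x in (0:ℝ)..(π/2), 2 * Real.cos ((2*(k:ℝ)+2) * x)) = 0 := by
      rw [intervalIntegral.integral_const_mul]
      have hc : (2*(k:ℝ)+2) ≠ 0 := by positivity
      rw [intervalIntegral.integral_comp_mul_left Real.cos hc, integral_cos]
      rw [mul_zero, show (2*(k:ℝ)+2) * (π/2) = ((k+1:ℕ):ℝ) * π by push_cast; ring,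
        Real.sin_nat_mul_pi, Real.sin_zero]
      simp
    linarith [key, ih, hzero]

lemma summable_inv_odd_sq : Summable (fun k : ℕ => 1 / (2*(k:ℝ)+1) ^ 2) := by
  have h : Summable (fun k : ℕ => 1 / ((k:ℝ)+1) ^ 2) := by
    have := (Real.summable_one_div_nat_pow (p := 2)).mpr one_lt_two
    exact ((summable_nat_add_iff 1).mpr this).congr (fun n => by push_cast; ring)
  refine Summable.of_nonneg_of_le (fun k => by positivity) (fun k => ?_) h
  have hsq : ((k:ℝ)+1)^2 ≤ (2*(k:ℝ)+1)^2 := by nlinarith [Nat.cast_nonneg (α := ℝ) k]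
  exact one_div_le_one_div_of_le (by positivity) hsq

/-- Main theorem. -/
theorem integral_x_pi_sub_x_div_sin :
    ((∫ x in (0:ℝ)..(π/2), x * (π - x) / Real.sin x : ℝ) : ℂ)
      = (7/2) * riemannZeta 3 := by
  have hπ : (0:ℝ) < π := Real.pi_pos
  have hπ' : π ≠ 0 := ne_of_gt hπ
  -- the series for 1/n³ and its odd part
  have hT : Summable (fun n : ℕ => 1 / (n:ℝ)^3) :=
    (Real.summable_one_div_nat_pow (p := 3)).mpr (by norm_num)
  set T : ℝ := ∑' n : ℕ, 1 / (n:ℝ)^3 with hTdef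
  have hTE : HasSum (fun m : ℕ => 1 / ((2*m:ℕ):ℝ)^3) (T/8) := by
    refine (hT.hasSum.div_const 8).congr_fun fun m => ?_
    push_cast
    ring
  have hinj : Function.Injective (fun k : ℕ => 2*k+1) := fun a b h => by
    simp only [] at h; omega
  have hTOsum : Summable (fun k : ℕ => 1 / ((2*k+1:ℕ):ℝ)^3) := hT.comp_injective hinj
  have hTO : HasSum (fun k : ℕ => 1 / ((2*k+1:ℕ):ℝ)^3) (∑' k, 1 / ((2*k+1:ℕ):ℝ)^3) :=
    hTOsum.hasSum
  have hodd_val : ∑' k, 1 / ((2*k+1:ℕ):ℝ)^3 = 7/8 * T := by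
    have := ((HasSum.even_add_odd (f := fun n : ℕ => 1/(n:ℝ)^3) hTE hTO).unique hT.hasSum)
    linarith
  -- the integral computation
  have hmain : (∫ x in (0:ℝ)..(π/2), x * (π - x) / Real.sin x) = 7/2 * T := by
    set G : ℕ → ℝ → ℝ := fun k x =>
      (8/π) * (Real.sin ((2*k+1:ℕ) * x) / ((2*k+1:ℕ):ℝ)^3 / Real.sin x) with hG
    have hGmeas : ∀ k : ℕ, MeasureTheory.AEStronglyMeasurable (G k)
        (MeasureTheory.volume.restrict (Set.Ioc (0:ℝ) (π/2))) := fun k =>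
      ((measurable_const.mul (((Real.continuous_sin.comp
        (continuous_const.mul continuous_id)).measurable.div_const _).div
        Real.continuous_sin.measurable))).aestronglyMeasurable
    have hGbound : ∀ k : ℕ, ∀ x : ℝ, ‖G k x‖ ≤ (8/π) * (1 / (2*(k:ℝ)+1)^2) := by
      intro k x
      rw [hG]
      have h1 : |Real.sin ((2*k+1:ℕ) * x) / Real.sin x| ≤ (2*(k:ℝ)+1) := by
        have := abs_dirichlet_le (2*k+1) x
        push_cast at this ⊢
        exact this
      have h2 : |Real.sin ((2*k+1:ℕ) * x) / ((2*k+1:ℕ):ℝ)^3 / Real.sin x|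
          = |Real.sin ((2*k+1:ℕ) * x) / Real.sin x| / ((2*k+1:ℕ):ℝ)^3 := by
        rw [div_right_comm, abs_div, abs_of_nonneg (by positivity : (0:ℝ) ≤ ((2*k+1:ℕ):ℝ)^3)]
      simp only [Real.norm_eq_abs, abs_mul]
      rw [abs_of_nonneg (by positivity : (0:ℝ) ≤ 8/π), h2]
      have hc : ((2*k+1:ℕ):ℝ)^3 = (2*(k:ℝ)+1)^3 := by push_cast; ring
      rw [hc]
      have hpos : (0:ℝ) < 2*(k:ℝ)+1 := by positivity
      gcongr (8/π) * ?_
      rw [div_le_div_iff₀ (by positivity) (by positivity)]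
      calc |Real.sin ((2*k+1:ℕ) * x) / Real.sin x| * (2*(k:ℝ)+1)^2
          ≤ (2*(k:ℝ)+1) * (2*(k:ℝ)+1)^2 := by gcongr
        _ = 1 * (2*(k:ℝ)+1)^3 := by ring
    have hconst : ∀ c : ℝ, MeasureTheory.IntegrableOn (fun _ : ℝ => c) (Set.Ioc (0:ℝ) (π/2))
        MeasureTheory.volume := fun c =>
      (MeasureTheory.integrableOn_const_iff).mpr (Or.inr (by rw [Real.volume_Ioc]; exact ENNReal.ofReal_lt_top))
    have hGint : ∀ k : ℕ, MeasureTheory.Integrable (G k)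
        (MeasureTheory.volume.restrict (Set.Ioc (0:ℝ) (π/2))) := by
      intro k
      refine MeasureTheory.Integrable.mono' (hconst ((8/π) * (1 / (2*(k:ℝ)+1)^2))) (hGmeas k) ?_
      filter_upwards with x
      exact hGbound k x
    have hGnorm : Summable (fun k : ℕ => ∫ x in Set.Ioc (0:ℝ) (π/2), ‖G k x‖) := by
      refine Summable.of_nonneg_of_le
        (fun k => MeasureTheory.integral_nonneg (fun x => norm_nonneg _))
        (fun k => ?_) (summable_inv_odd_sq.mul_left ((8/π) * (π/2)))
      have hle : ∫ x in Set.Ioc (0:ℝ) (π/2), ‖G k x‖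
          ≤ ∫ _x in Set.Ioc (0:ℝ) (π/2), (8/π) * (1 / (2*(k:ℝ)+1)^2) :=
        MeasureTheory.integral_mono (hGint k).norm (hconst _) (fun x => hGbound k x)
      refine hle.trans ?_
      rw [MeasureTheory.setIntegral_const, Real.volume_real_Ioc, smul_eq_mul,
        sub_zero, max_eq_left (by positivity)]
      exact le_of_eq (by ring)
    have hswap := MeasureTheory.integral_tsum_of_summable_integral_norm hGint hGnorm
    -- pointwise identity on Ioc
    have hpt : ∀ x ∈ Set.Ioc (0:ℝ) (π/2),
        x * (π - x) / Real.sin x = ∑' k, G k x := by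
      intro x hx
      have hs := hasSum_odd_sin3 (le_of_lt hx.1) hx.2
      have hsin : Real.sin x ≠ 0 := ne_of_gt (Real.sin_pos_of_pos_of_lt_pi hx.1
        (lt_of_le_of_lt hx.2 (by linarith)))
      have hs2 := (hs.div_const (Real.sin x)).mul_left (8/π)
      have h8 : (8/π) * (π/8 * (x * (π - x)) / Real.sin x) = x * (π - x) / Real.sin x := by
        field_simp
      rw [h8] at hs2
      rw [← hs2.tsum_eq]
      refine tsum_congr fun k => ?_
      rw [hG]
      push_cast
      ring
    have heq : (∫ x in (0:ℝ)..(π/2), x * (π - x) / Real.sin x)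
        = ∫ x in Set.Ioc (0:ℝ) (π/2), ∑' k, G k x := by
      rw [intervalIntegral.integral_of_le (by positivity)]
      exact MeasureTheory.setIntegral_congr_fun measurableSet_Ioc hpt
    rw [heq, ← hswap]
    -- evaluate each integral
    have hval : ∀ k : ℕ, (∫ x in Set.Ioc (0:ℝ) (π/2), G k x) = 4 / (2*(k:ℝ)+1)^3 := by
      intro k
      rw [← intervalIntegral.integral_of_le (by positivity)]
      have hGc : ∀ x : ℝ, G k x
          = ((8/π) / ((2*k+1:ℕ):ℝ)^3) * (Real.sin ((2*k+1:ℕ) * x) / Real.sin x) := by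
        intro x
        rw [hG]
        ring
      rw [intervalIntegral.integral_congr (fun x _ => hGc x),
        intervalIntegral.integral_const_mul, integral_dirichlet k]
      rw [show ((2*k+1:ℕ):ℝ) = 2*(k:ℝ)+1 by push_cast; ring]
      field_simp
      ring
    calc ∑' k, (∫ x in Set.Ioc (0:ℝ) (π/2), G k x) = ∑' k : ℕ, 4 / (2*(k:ℝ)+1)^3 :=
          tsum_congr hval
      _ = 4 * ∑' k : ℕ, 1 / ((2*k+1:ℕ):ℝ)^3 := by
          rw [← tsum_mul_left]
          refine tsum_congr fun k => ?_
          push_cast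
          ring
      _ = 7/2 * T := by rw [hodd_val]; ring
  -- relate T to riemannZeta 3
  have hzeta : riemannZeta 3 = (T : ℂ) := by
    rw [show (3:ℂ) = ((3:ℕ):ℂ) by norm_num, zeta_nat_eq_tsum_of_gt_one (by norm_num), hTdef]
    rw [Complex.ofReal_tsum]
    refine tsum_congr fun n => ?_
    push_cast
    ring
  rw [hmain, hzeta]
  push_cast
  ring
end

section
/- For each natural number n ≥ 1, ζ(2n+1) = (−1)^{n+1} · (2π)^{2n+1}/(2n+1)! · ∫₀^{1/2} B_{2n+1}(x)·cot(πx) dx, where B_{2n+1} is the Bernoulli polynomial of degree 2n+1. -/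
open Real Polynomial MeasureTheory intervalIntegral

lemma abs_sin_nat_mul_le' (m : ℕ) (θ : ℝ) : |Real.sin (m*θ)| ≤ m * |Real.sin θ| := by
  induction m with
  | zero => simp
  | succ m ih =>
    have h : ((m+1:ℕ):ℝ)*θ = m*θ + θ := by push_cast; ring
    rw [h, Real.sin_add]
    calc |Real.sin (m*θ) * Real.cos θ + Real.cos (m*θ) * Real.sin θ|
        ≤ |Real.sin (m*θ) * Real.cos θ| + |Real.cos (m*θ) * Real.sin θ| := abs_add_le _ _
      _ ≤ |Real.sin (m*θ)| * 1 + 1 * |Real.sin θ| := by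
          rw [abs_mul, abs_mul]
          gcongr <;> [exact Real.abs_cos_le_one θ; exact Real.abs_cos_le_one _]
      _ ≤ m * |Real.sin θ| + 1 * |Real.sin θ| := by rw [mul_one]; gcongr
      _ = ((m+1:ℕ):ℝ) * |Real.sin θ| := by push_cast; ring

lemma trig_key (x : ℝ) (k : ℕ) :
    Real.sin (2*π*k*x) * Real.cos (π*x)
      = Real.sin (π*x) * ∑ j ∈ Finset.range k,
          (Real.cos (2*π*j*x) + Real.cos (2*π*(j+1)*x)) := by
  induction k with
  | zero => simp
  | succ k ih =>
    rw [Finset.sum_range_succ]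
    push_cast
    have h : 2*π*((k:ℝ)+1)*x = 2*π*(k:ℝ)*x + 2*(π*x) := by ring
    rw [h, Real.sin_add, Real.cos_add, Real.sin_two_mul, Real.cos_two_mul]
    push_cast at ih
    linear_combination ih + (2*Real.sin (2*π*(k:ℝ)*x)*Real.cos (π*x)) * (Real.sin_sq_add_cos_sq (π*x))

lemma int_cos_nat (m : ℕ) :
    ∫ x in (0:ℝ)..(1/2), Real.cos (2*π*m*x) = if m = 0 then 1/2 else 0 := by
  rcases eq_or_ne m 0 with rfl | hm
  · simp
  · have hc : (2*π*(m:ℝ)) ≠ 0 := by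
      positivity
    rw [if_neg hm]
    have : ∀ x : ℝ, Real.cos (2*π*m*x) = Real.cos (2*π*(m:ℝ) * x) := fun x => rfl
    rw [show (fun x => Real.cos (2*π*(m:ℝ)*x)) = fun x => Real.cos (2*π*(m:ℝ)*x) from rfl]
    have := intervalIntegral.integral_comp_mul_left (a := (0:ℝ)) (b := 1/2) (fun y => Real.cos y) hc
    simp only [mul_zero] at this
    calc ∫ x in (0:ℝ)..(1/2), Real.cos (2*π*(m:ℝ)*x)
        = (2*π*(m:ℝ))⁻¹ • ∫ y in (0:ℝ)..(2*π*(m:ℝ)*(1/2)), Real.cos y := this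
      _ = 0 := by
          rw [integral_cos]
          have : 2*π*(m:ℝ)*(1/2) = m * π := by ring
          rw [this, Real.sin_nat_mul_pi, Real.sin_zero, sub_zero, smul_zero]

lemma key_integral (k : ℕ) (hk : 1 ≤ k) :
    ∫ x in (0:ℝ)..(1/2), Real.sin (2*π*k*x) * (Real.cos (π*x)/Real.sin (π*x)) = 1/2 := by
  have h2 : (0:ℝ) ≤ 1/2 := by norm_num
  rw [intervalIntegral.integral_of_le h2]
  have heq : Set.EqOn (fun x => Real.sin (2*π*k*x) * (Real.cos (π*x)/Real.sin (π*x)))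
      (fun x => ∑ j ∈ Finset.range k, (Real.cos (2*π*j*x) + Real.cos (2*π*(j+1)*x)))
      (Set.Ioc (0:ℝ) (1/2)) := by
    intro x hx
    have hs : Real.sin (π*x) ≠ 0 := by
      refine ne_of_gt (Real.sin_pos_of_pos_of_lt_pi (mul_pos Real.pi_pos hx.1) ?_)
      have : π * x ≤ π * (1/2) := by
        have := hx.2
        nlinarith [Real.pi_pos]
      nlinarith [Real.pi_pos]
    simp only
    rw [mul_div_assoc', div_eq_iff hs, trig_key x k]
    ring
  rw [MeasureTheory.setIntegral_congr_fun measurableSet_Ioc heq]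
  rw [← intervalIntegral.integral_of_le h2]
  rw [intervalIntegral.integral_finset_sum (fun j _ => Continuous.intervalIntegrable (by fun_prop) _ _)]
  have : ∀ j ∈ Finset.range k, (∫ x in (0:ℝ)..(1/2), (Real.cos (2*π*j*x) + Real.cos (2*π*(j+1)*x)))
      = (if j = 0 then 1/2 else 0) + (if (j+1) = 0 then 1/2 else 0) := by
    intro j _
    rw [intervalIntegral.integral_add (Continuous.intervalIntegrable (by fun_prop) _ _)
      (Continuous.intervalIntegrable (by fun_prop) _ _)]
    rw [int_cos_nat j]
    have := int_cos_nat (j+1)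
    push_cast at this ⊢
    rw [this]
  rw [Finset.sum_congr rfl this]
  rw [Finset.sum_add_distrib]
  simp only [Finset.sum_ite_eq', Finset.mem_range]
  simp only [Nat.add_eq_zero, and_false, if_false, Finset.sum_const_zero, add_zero, one_ne_zero]
  rw [if_pos (by omega : 0 < k)]

theorem zeta_odd_bernoulli_cot (n : ℕ) (hn : 1 ≤ n) :
    riemannZeta ((2*n+1 : ℕ) : ℂ)
      = (-1 : ℂ)^(n+1) * (2*(π : ℂ))^(2*n+1) / ((2*n+1).factorial : ℂ) *
        ((∫ x in (0:ℝ)..(1/2),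
            (Polynomial.aeval x (Polynomial.bernoulli (2*n+1))) *
              (Real.cos (π*x) / Real.sin (π*x)) : ℝ) : ℂ) := by
  have hn0 : n ≠ 0 := by omega
  set c : ℝ := (-1:ℝ)^(n+1) * (2*π)^(2*n+1) / 2 / ((2*n+1).factorial : ℝ) with hc
  set F : ℕ → ℝ → ℝ := fun k x =>
    1/(k:ℝ)^(2*n+1) * Real.sin (2*π*k*x) * (Real.cos (π*x)/Real.sin (π*x)) with hF
  have hBa : ∀ x : ℝ, (Polynomial.aeval x (Polynomial.bernoulli (2*n+1)) : ℝ)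
      = (Polynomial.map (algebraMap ℚ ℝ) (Polynomial.bernoulli (2*n+1))).eval x := fun x => by
    rw [Polynomial.aeval_def, Polynomial.eval_map]
  have hsin : ∀ x ∈ Set.Ioc (0:ℝ) (1/2:ℝ), 0 < Real.sin (π*x) := by
    intro x hx
    refine Real.sin_pos_of_pos_of_lt_pi (mul_pos Real.pi_pos hx.1) ?_
    nlinarith [Real.pi_pos, hx.2]
  have hsum : ∀ x ∈ Set.Ioc (0:ℝ) (1/2:ℝ), HasSum (fun k => F k x)
      (c * ((Polynomial.aeval x (Polynomial.bernoulli (2*n+1)) : ℝ) *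
        (Real.cos (π*x)/Real.sin (π*x)))) := by
    intro x hx
    have hx1 : x ∈ Set.Icc (0:ℝ) 1 := ⟨le_of_lt hx.1, by linarith [hx.2]⟩
    have h := (hasSum_one_div_nat_pow_mul_sin hn0 hx1).mul_right (Real.cos (π*x)/Real.sin (π*x))
    rw [hBa x]
    convert h using 1
    · rfl
    rw [hc]
    ring
  have hbound : ∀ (k : ℕ), ∀ x ∈ Set.Ioc (0:ℝ) (1/2:ℝ), ‖F k x‖ ≤ 2/(k:ℝ)^(2*n) := by
    intro k x hx
    rcases Nat.eq_zero_or_pos k with rfl | hk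
    · simp [hF, zero_pow (by omega : 2*n ≠ 0)]
    · have hs := hsin x hx
      have hk' : (0:ℝ) < (k:ℝ) := by exact_mod_cast hk
      have h1 : |Real.sin (2*π*k*x)| ≤ (2*(k:ℝ)) * Real.sin (π*x) := by
        have h := abs_sin_nat_mul_le' (2*k) (π*x)
        rw [abs_of_pos hs] at h
        have harg : 2*π*(k:ℝ)*x = ((2*k : ℕ):ℝ)*(π*x) := by push_cast; ring
        rw [harg]
        calc |Real.sin (((2*k:ℕ):ℝ)*(π*x))| ≤ ((2*k:ℕ):ℝ) * Real.sin (π*x) := h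
          _ = (2*(k:ℝ)) * Real.sin (π*x) := by push_cast; ring
      have e1 : ‖F k x‖ = 1/(k:ℝ)^(2*n+1) * |Real.sin (2*π*k*x)|
          * (|Real.cos (π*x)| / Real.sin (π*x)) := by
        rw [hF]
        simp only [Real.norm_eq_abs, abs_mul, abs_div, abs_of_pos hs,
          abs_of_nonneg (by positivity : (0:ℝ) ≤ 1/(k:ℝ)^(2*n+1))]
      rw [e1]
      calc 1/(k:ℝ)^(2*n+1) * |Real.sin (2*π*k*x)| * (|Real.cos (π*x)| / Real.sin (π*x))
          ≤ 1/(k:ℝ)^(2*n+1) * ((2*(k:ℝ)) * Real.sin (π*x)) * (1 / Real.sin (π*x)) := by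
            gcongr
            exact Real.abs_cos_le_one _
        _ = 2/(k:ℝ)^(2*n) := by
            have hkne : (k:ℝ) ≠ 0 := ne_of_gt hk'
            field_simp
            ring
  have hmeas : ∀ k, MeasureTheory.AEStronglyMeasurable (F k)
      (MeasureTheory.volume.restrict (Set.Ioc (0:ℝ) (1/2:ℝ))) := by
    intro k
    apply Measurable.aestronglyMeasurable
    fun_prop
  have hint : ∀ k, MeasureTheory.Integrable (F k)
      (MeasureTheory.volume.restrict (Set.Ioc (0:ℝ) (1/2:ℝ))) := by
    intro k
    refine MeasureTheory.Integrable.mono' (MeasureTheory.integrable_const (2/(k:ℝ)^(2*n)))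
      (hmeas k) ?_
    exact (MeasureTheory.ae_restrict_iff' measurableSet_Ioc).mpr
      (Filter.Eventually.of_forall fun x hx => hbound k x hx)
  have hIbound : ∀ k, (∫ x in Set.Ioc (0:ℝ) (1/2:ℝ), ‖F k x‖) ≤ 1/(k:ℝ)^(2*n) := by
    intro k
    calc (∫ x in Set.Ioc (0:ℝ) (1/2:ℝ), ‖F k x‖)
        ≤ ∫ _x in Set.Ioc (0:ℝ) (1/2:ℝ), (2/(k:ℝ)^(2*n)) := by
          refine MeasureTheory.integral_mono_ae (hint k).norm
            (MeasureTheory.integrable_const _) ?_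
          exact (MeasureTheory.ae_restrict_iff' measurableSet_Ioc).mpr
            (Filter.Eventually.of_forall fun x hx => hbound k x hx)
      _ = 1/(k:ℝ)^(2*n) := by
          rw [MeasureTheory.setIntegral_const, Real.volume_real_Ioc_of_le (by norm_num : (0:ℝ) ≤ 1/2), smul_eq_mul]
          ring
  have hsummable : Summable (fun k : ℕ => ∫ x in Set.Ioc (0:ℝ) (1/2:ℝ), ‖F k x‖) := by
    refine Summable.of_nonneg_of_le
      (fun k => MeasureTheory.integral_nonneg fun x => norm_nonneg _) hIbound ?_
    exact Real.summable_one_div_nat_pow.mpr (by omega)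
  have hswap := MeasureTheory.hasSum_integral_of_summable_integral_norm hint hsummable
  have hIk : ∀ k : ℕ, (∫ x in Set.Ioc (0:ℝ) (1/2:ℝ), F k x) = 1/(k:ℝ)^(2*n+1) * (1/2) := by
    intro k
    rcases Nat.eq_zero_or_pos k with rfl | hk
    · simp [hF]
    · have he : ∀ x : ℝ, F k x = 1/(k:ℝ)^(2*n+1) *
          (Real.sin (2*π*k*x) * (Real.cos (π*x)/Real.sin (π*x))) := by
        intro x; rw [hF]; ring
      simp only [he]
      rw [MeasureTheory.integral_const_mul,
        ← intervalIntegral.integral_of_le (by norm_num : (0:ℝ) ≤ 1/2), key_integral k hk]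
  have h5 : (∫ x in Set.Ioc (0:ℝ) (1/2:ℝ), ∑' k, F k x)
      = c * ∫ x in Set.Ioc (0:ℝ) (1/2:ℝ),
          (Polynomial.aeval x (Polynomial.bernoulli (2*n+1)) : ℝ) *
            (Real.cos (π*x)/Real.sin (π*x)) := by
    rw [MeasureTheory.setIntegral_congr_fun measurableSet_Ioc
      (fun x hx => (hsum x hx).tsum_eq)]
    exact MeasureTheory.integral_const_mul c _
  set Z : ℝ := ∑' k : ℕ, 1/(k:ℝ)^(2*n+1) with hZ
  have hzsum : HasSum (fun k : ℕ => 1/(k:ℝ)^(2*n+1)) Z :=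
    (Real.summable_one_div_nat_pow.mpr (by omega)).hasSum
  have h7 : Z * (1/2) = c * ∫ x in Set.Ioc (0:ℝ) (1/2:ℝ),
      (Polynomial.aeval x (Polynomial.bernoulli (2*n+1)) : ℝ) *
        (Real.cos (π*x)/Real.sin (π*x)) := by
    rw [h5] at hswap
    simp only [hIk] at hswap
    exact (hzsum.mul_right (1/2)).unique hswap
  rw [zeta_nat_eq_tsum_of_gt_one (by omega : 1 < 2*n+1)]
  have hcast : (∑' k : ℕ, 1/(k:ℂ)^(2*n+1)) = (Z : ℂ) := by
    rw [hZ, Complex.ofReal_tsum]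
    congr 1
    funext k
    push_cast
    rfl
  rw [hcast, intervalIntegral.integral_of_le (by norm_num : (0:ℝ) ≤ 1/2)]
  have h8 : Z = (2*c) * ∫ x in Set.Ioc (0:ℝ) (1/2:ℝ),
      (Polynomial.aeval x (Polynomial.bernoulli (2*n+1)) : ℝ) *
        (Real.cos (π*x)/Real.sin (π*x)) := by linarith [h7]
  rw [h8, hc]
  push_cast
  ring
end

section
/- For real t with |t| < 1, ∑_{n=1}^∞ ζ(2n)·t^{2n}/n = log(πt / sin(πt)), equivalently ∑_{n=1}^∞ ζ(2n) t^{2n}/n = log Γ(1+t) + log Γ(1−t). -/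
open Real Filter Finset Topology

lemma aux_main (t : ℝ) (ht : |t| < 1) (ht0 : t ≠ 0) :
    HasSum (fun n : ℕ => (∑' k : ℕ, 1/((k:ℝ)+1)^(2*(n+1))) * t^(2*(n+1)) / ((n:ℝ)+1))
      (Real.log (π * t / Real.sin (π * t))) := by
  have ht2 : t^2 < 1 := by nlinarith [abs_nonneg t, sq_abs t]
  set x : ℕ → ℝ := fun k => t^2/((k:ℝ)+1)^2 with hxdef
  have hx0 : ∀ k, 0 ≤ x k := fun k => by positivity
  have hx1 : ∀ k, x k < 1 := by
    intro k
    calc x k ≤ t^2 := div_le_self (sq_nonneg t) (by nlinarith [Nat.cast_nonneg (α := ℝ) k])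
    _ < 1 := ht2
  have hx1' : ∀ k, 0 < 1 - x k := fun k => by linarith [hx1 k]
  set g : ℕ → ℝ := fun k => -Real.log (1 - x k) with hgdef
  have hg0 : ∀ k, 0 ≤ g k := fun k => by
    simp only [hgdef, neg_nonneg]
    exact Real.log_nonpos (le_of_lt (hx1' k)) (by linarith [hx0 k])
  have hA : ∀ k, HasSum (fun n : ℕ => x k ^ (n+1) / (n+1)) (g k) := by
    intro k
    exact hasSum_pow_div_log_of_abs_lt_one (by rw [abs_of_nonneg (hx0 k)]; exact hx1 k)
  have hπt : π * t ≠ 0 := mul_ne_zero Real.pi_ne_zero ht0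
  set P : ℝ := Real.sin (π * t) / (π * t) with hPdef
  have hP : 0 < P := by
    rcases lt_or_gt_of_ne ht0 with h | h
    · have h1 : Real.sin (π * t) < 0 := by
        have : 0 < Real.sin (π * (-t)) := Real.sin_pos_of_pos_of_lt_pi (by nlinarith [Real.pi_pos])
          (by nlinarith [Real.pi_pos, abs_lt.mp ht])
        rw [mul_neg, Real.sin_neg] at this; linarith
      exact div_pos_of_neg_of_neg h1 (by nlinarith [Real.pi_pos])
    · exact div_pos (Real.sin_pos_of_pos_of_lt_pi (by nlinarith [Real.pi_pos])
        (by nlinarith [Real.pi_pos, abs_lt.mp ht])) (by nlinarith [Real.pi_pos])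
  have hprod : Tendsto (fun N : ℕ => ∏ j ∈ range N, (1 - x j)) atTop (𝓝 P) := by
    have h1 := (Real.tendsto_euler_sin_prod t).mul_const (π * t)⁻¹
    have h2 : ∀ N : ℕ, (π * t * ∏ j ∈ range N, (1 - t^2/((j:ℝ)+1)^2)) * (π * t)⁻¹
        = ∏ j ∈ range N, (1 - x j) := by
      intro N
      rw [mul_comm (π * t), mul_assoc, mul_inv_cancel₀ hπt, mul_one]
    rw [show P = Real.sin (π * t) * (π * t)⁻¹ from div_eq_mul_inv _ _]
    exact h1.congr h2
  have hprodpos : ∀ N, 0 < ∏ j ∈ range N, (1 - x j) :=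
    fun N => Finset.prod_pos (fun j _ => hx1' j)
  have hanti : Antitone (fun N : ℕ => ∏ j ∈ range N, (1 - x j)) := by
    apply antitone_nat_of_succ_le
    intro N
    rw [Finset.prod_range_succ]
    nlinarith [hprodpos N, hx0 N, hx1 N]
  have hge : ∀ N, P ≤ ∏ j ∈ range N, (1 - x j) := by
    intro N
    exact le_of_tendsto hprod (eventually_atTop.2 ⟨N, fun m hm => hanti hm⟩)
  have hPS : ∀ N, ∑ k ∈ range N, g k = -Real.log (∏ j ∈ range N, (1 - x j)) := by
    intro N
    rw [Real.log_prod (fun j _ => (hx1' j).ne'), ← Finset.sum_neg_distrib]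
  have hbound : ∀ N, ∑ k ∈ range N, g k ≤ -Real.log P := by
    intro N
    rw [hPS N]
    exact neg_le_neg (Real.log_le_log hP (hge N))
  have hgsum : Summable g := summable_of_sum_range_le hg0 hbound
  have hBtendsto : Tendsto (fun N : ℕ => ∑ k ∈ range N, g k) atTop (𝓝 (-Real.log P)) := by
    simp only [hPS]
    exact (((Real.continuousAt_log hP.ne').tendsto.comp hprod).neg)
  have hB : HasSum g (-Real.log P) := (hgsum.hasSum_iff_tendsto_nat).mpr hBtendsto
  -- double sum
  set f : ℕ × ℕ → ℝ := Function.uncurry (fun (k n : ℕ) => x k ^ (n+1) / ((n:ℝ)+1)) with hfdef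
  have hfsum : Summable f := by
    rw [summable_prod_of_nonneg (fun p => by
      simp only [hfdef, Function.uncurry]
      have := hx0 p.1; positivity)]
    refine ⟨fun k => (hA k).summable, ?_⟩
    have : (fun k => ∑' n : ℕ, f (k, n)) = g := by
      funext k; exact (hA k).tsum_eq
    rw [this]; exact hgsum
  have hswap : ∑' (n : ℕ), ∑' (k : ℕ), x k ^ (n+1) / (n+1) = ∑' k, g k := by
    rw [Summable.tsum_comm (f := fun (k n : ℕ) => x k ^ (n+1) / ((n:ℝ)+1)) hfsum]
    congr 1; funext k; exact (hA k).tsum_eq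
  have hterm : ∀ n : ℕ, (∑' k : ℕ, 1/((k:ℝ)+1)^(2*(n+1))) * t^(2*(n+1)) / ((n:ℝ)+1)
      = ∑' k : ℕ, x k ^ (n+1) / ((n:ℝ)+1) := by
    intro n
    rw [← tsum_mul_right, ← tsum_div_const]
    congr 1; funext k
    rw [hxdef]
    rw [div_pow, ← pow_mul, ← pow_mul]
    ring
  have hval : ∑' k, g k = Real.log (π * t / Real.sin (π * t)) := by
    rw [hB.tsum_eq, ← Real.log_inv, hPdef, inv_div]
  have hfinal : (fun n : ℕ => (∑' k : ℕ, 1/((k:ℝ)+1)^(2*(n+1))) * t^(2*(n+1)) / ((n:ℝ)+1))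
      = fun n : ℕ => ∑' k : ℕ, x k ^ (n+1) / ((n:ℝ)+1) := funext hterm
  rw [hfinal, ← hval, ← hswap]
  exact (hfsum.prod_symm.prod).hasSum
lemma aux_zeta (n : ℕ) : riemannZeta ((2*(n+1) : ℕ) : ℂ)
    = ((∑' k : ℕ, 1/((k:ℝ)+1)^(2*(n+1)) : ℝ) : ℂ) := by
  rw [zeta_nat_eq_tsum_of_gt_one (by omega)]
  have hsum : Summable (fun k : ℕ => 1/(k:ℝ)^(2*(n+1))) :=
    Real.summable_one_div_nat_pow.mpr (by omega)
  have h1 : ∀ k : ℕ, (1/(k:ℂ)^(2*(n+1))) = ((1/(k:ℝ)^(2*(n+1)) : ℝ) : ℂ) := by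
    intro k; push_cast; ring
  rw [tsum_congr h1, ← Complex.ofReal_tsum]
  rw [Complex.ofReal_inj]
  rw [hsum.tsum_eq_zero_add]
  have h0 : (1:ℝ)/((0:ℕ):ℝ)^(2*(n+1)) = 0 := by
    simp [zero_pow (by omega : 2*(n+1) ≠ 0)]
  rw [h0, zero_add]
  exact tsum_congr (fun k => by push_cast; ring)

theorem zeta_even_series_log (t : ℝ) (ht : |t| < 1) :
    (∑' n : ℕ, riemannZeta ((2*(n+1) : ℕ) : ℂ) * (t : ℂ)^(2*(n+1)) / ((n:ℂ)+1)
        = ((Real.log (π * t / Real.sin (π * t)) : ℝ) : ℂ)) ∧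
    (∑' n : ℕ, riemannZeta ((2*(n+1) : ℕ) : ℂ) * (t : ℂ)^(2*(n+1)) / ((n:ℂ)+1)
        = ((Real.log (Real.Gamma (1 + t)) + Real.log (Real.Gamma (1 - t)) : ℝ) : ℂ)) := by
  rcases eq_or_ne t 0 with rfl | ht0
  · have hz : ∀ n : ℕ, riemannZeta ((2*(n+1) : ℕ) : ℂ) * ((0:ℝ) : ℂ)^(2*(n+1)) / ((n:ℂ)+1) = 0 := by
      intro n
      simp [zero_pow (by omega : 2*(n+1) ≠ 0)]
    rw [tsum_congr hz, tsum_zero]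
    constructor
    · simp
    · simp [Real.Gamma_one]
  · have H := aux_main t ht ht0
    have hterm : ∀ n : ℕ, riemannZeta ((2*(n+1) : ℕ) : ℂ) * (t:ℂ)^(2*(n+1)) / ((n:ℂ)+1)
        = (((∑' k : ℕ, 1/((k:ℝ)+1)^(2*(n+1))) * t^(2*(n+1)) / ((n:ℝ)+1) : ℝ) : ℂ) := by
      intro n
      rw [aux_zeta n]
      push_cast
      ring
    have hS : (∑' n : ℕ, riemannZeta ((2*(n+1) : ℕ) : ℂ) * (t:ℂ)^(2*(n+1)) / ((n:ℂ)+1))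
        = ((Real.log (π * t / Real.sin (π * t)) : ℝ) : ℂ) := by
      rw [tsum_congr hterm, ← Complex.ofReal_tsum, H.tsum_eq]
    refine ⟨hS, ?_⟩
    rw [hS, Complex.ofReal_inj]
    have h1t : (0:ℝ) < 1 + t := by have := abs_lt.mp ht; linarith
    have h2t : (0:ℝ) < 1 - t := by have := abs_lt.mp ht; linarith
    rw [← Real.log_mul (Real.Gamma_pos_of_pos h1t).ne' (Real.Gamma_pos_of_pos h2t).ne']
    congr 1
    rw [show (1:ℝ)+t = t+1 by ring, Real.Gamma_add_one ht0, mul_assoc,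
      Real.Gamma_mul_Gamma_one_sub]
    field_simp
end

section
/- ∑_{n=1}^∞ ζ(2n)/(n(2n+1)·2^{2n}) = log π − 1. -/
open Real Filter Finset

lemma innerSum {y : ℝ} (hy : 1 ≤ y) :
    HasSum (fun n : ℕ => (1/(2*y))^(2*(n+1)) / (((n:ℝ)+1)*(2*((n:ℝ)+1)+1)))
      (2 + 2*Real.log (2*y) + (2*y-1)*Real.log (2*y-1) - (2*y+1)*Real.log (2*y+1)) := by
  have hy0 : (0:ℝ) < y := by linarith
  set x : ℝ := 1/(2*y) with hx
  have hx0 : 0 < x := by positivity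
  have hx1 : x < 1 := by
    rw [hx, div_lt_one (by linarith)]; linarith
  have h1 : HasSum (fun n : ℕ => (x^2) ^ (n + 1) / (n + 1)) (-Real.log (1 - x^2)) :=
    hasSum_pow_div_log_of_abs_lt_one (by
      rw [abs_of_nonneg (by positivity)]; nlinarith)
  have h2 := hasSum_log_sub_log_of_abs_lt_one (x := x) (by rw [abs_of_pos hx0]; exact hx1)
  have h3 : HasSum (fun n : ℕ => (2:ℝ) * (1 / (2 * (n+1) + 1)) * x ^ (2 * (n+1) + 1))
      ((Real.log (1+x) - Real.log (1-x)) - 2*x) := by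
    have := (hasSum_nat_add_iff' (f := fun k : ℕ => (2:ℝ) * (1 / (2 * k + 1)) * x ^ (2 * k + 1))
      (g := Real.log (1+x) - Real.log (1-x)) 1).mpr h2
    simpa using this
  have h4 := h1.sub (h3.mul_left (1/x))
  have hfun : (fun n : ℕ => (x^2) ^ (n + 1) / (n + 1)
      - (1/x) * ((2:ℝ) * (1 / (2 * (n+1) + 1)) * x ^ (2 * (n+1) + 1)))
      = fun n : ℕ => x^(2*(n+1)) / (((n:ℝ)+1)*(2*((n:ℝ)+1)+1)) := by
    funext n
    have hn1 : ((n:ℝ)+1) ≠ 0 := by positivity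
    have hn2 : (2*((n:ℝ)+1)+1) ≠ 0 := by positivity
    have hpow : x ^ (2 * (n+1) + 1) = x^(2*(n+1)) * x := by ring
    have hpow2 : (x^2) ^ (n+1) = x^(2*(n+1)) := by rw [← pow_mul]
    rw [hpow, hpow2]
    field_simp
    push_cast
    ring
  rw [hfun] at h4
  have e1 : (1:ℝ) + x = (2*y+1)/(2*y) := by rw [hx]; field_simp
  have e2 : (1:ℝ) - x = (2*y-1)/(2*y) := by rw [hx]; field_simp
  have e3 : (1:ℝ) - x^2 = (1-x)*(1+x) := by ring
  have e4 : (1:ℝ)/x = 2*y := by rw [hx]; field_simp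
  have p1 : (0:ℝ) < 2*y+1 := by linarith
  have p2 : (0:ℝ) < 2*y-1 := by linarith
  have p3 : (0:ℝ) < 2*y := by linarith
  have hval : -Real.log (1 - x^2) - 1/x*(Real.log (1+x) - Real.log (1-x) - 2*x)
      = 2 + 2*Real.log (2*y) + (2*y-1)*Real.log (2*y-1) - (2*y+1)*Real.log (2*y+1) := by
    rw [e3, Real.log_mul (by rw [e2]; positivity) (by rw [e1]; positivity),
      e1, e2, e4, Real.log_div p1.ne' p3.ne', Real.log_div p2.ne' p3.ne', hx]
    field_simp
    ring
  rw [hval] at h4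
  exact h4


noncomputable def gterm (k : ℕ) : ℝ :=
  2 + 2*Real.log (2*((k:ℝ)+1)) + (2*(k:ℝ)+1)*Real.log (2*(k:ℝ)+1)
    - (2*(k:ℝ)+3)*Real.log (2*(k:ℝ)+3)

lemma partialSum (K : ℕ) : ∑ k ∈ range K, gterm k
    = 2*K + 2*K*Real.log 2 + 2*Real.log (K.factorial : ℝ) - (2*K+1)*Real.log (2*K+1) := by
  induction K with
  | zero => simp [Real.log_one]
  | succ K ih =>
    rw [sum_range_succ, ih, gterm]
    have h1 : Real.log (2*((K:ℝ)+1)) = Real.log 2 + Real.log ((K:ℝ)+1) :=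
      Real.log_mul two_ne_zero (by positivity)
    have h2 : Real.log ((K+1).factorial : ℝ) = Real.log ((K:ℝ)+1) + Real.log (K.factorial : ℝ) := by
      rw [Nat.factorial_succ]
      push_cast
      exact Real.log_mul (by positivity) (by have := K.factorial_pos; positivity)
    push_cast
    rw [h2, h1]
    ring_nf


lemma partialSum_eq (K : ℕ) (hK : 1 ≤ K) : ∑ k ∈ range K, gterm k
    = 2*Real.log (Stirling.stirlingSeq K)
      - (2*K+1)*(Real.log (2*K+1) - Real.log (2*K)) := by
  have hK0 : (0:ℝ) < K := by exact_mod_cast hK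
  have hfac : (0:ℝ) < (K.factorial : ℝ) := by have := K.factorial_pos; positivity
  have hst : Real.log (Stirling.stirlingSeq K)
      = Real.log (K.factorial : ℝ) - (1/2)*Real.log (2*K) - K*Real.log K + K := by
    rw [Stirling.stirlingSeq]
    rw [Real.log_div hfac.ne' (by positivity), Real.log_mul (by positivity) (by positivity),
      Real.log_pow, Real.log_div hK0.ne' (Real.exp_pos 1).ne', Real.log_exp,
      Real.log_sqrt (by positivity)]
    push_cast
    ring
  have hlog2K : Real.log (2*(K:ℝ)) = Real.log 2 + Real.log (K:ℝ) :=
    Real.log_mul two_ne_zero hK0.ne'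
  rw [partialSum, hst, hlog2K]
  ring

lemma tendsto_partialSum : Filter.Tendsto (fun K : ℕ => ∑ k ∈ range K, gterm k)
    atTop (nhds (Real.log π - 1)) := by
  have h1 : Filter.Tendsto (fun K : ℕ => 2*Real.log (Stirling.stirlingSeq K)) atTop
      (nhds (Real.log π)) := by
    have hc : ContinuousAt Real.log (Real.sqrt π) :=
      Real.continuousAt_log (Real.sqrt_pos.mpr Real.pi_pos).ne'
    have := (hc.tendsto.comp Stirling.tendsto_stirlingSeq_sqrt_pi).const_mul (2:ℝ)
    rw [Real.log_sqrt Real.pi_pos.le] at this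
    convert this using 2 <;> (try simp only [Function.comp_apply]) <;> ring
  have h2 : Filter.Tendsto (fun K : ℕ => (2*(K:ℝ)+1)*(Real.log (2*K+1) - Real.log (2*K)))
      atTop (nhds 1) := by
    have hnat : Filter.Tendsto (fun K : ℕ => 2*(K:ℝ)) atTop atTop :=
      (tendsto_natCast_atTop_atTop).const_mul_atTop two_pos
    have ha : Filter.Tendsto (fun K : ℕ => (2*(K:ℝ))*Real.log (1 + 1/(2*K))) atTop (nhds 1) := by
      have := (Real.tendsto_mul_log_one_add_div_atTop 1).comp hnat
      simpa [Function.comp_def, one_div, mul_inv_rev] using this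
    have hb : Filter.Tendsto (fun K : ℕ => Real.log (1 + 1/(2*(K:ℝ)))) atTop (nhds 0) := by
      have h0 : Filter.Tendsto (fun K : ℕ => 1 + 1/(2*(K:ℝ))) atTop (nhds 1) := by
        have h := hnat.inv_tendsto_atTop
        have := (tendsto_const_nhds (x := (1:ℝ))).add h
        rw [add_zero] at this
        simpa [Function.comp_def, one_div, mul_inv_rev, Pi.inv_def] using this
      have : ContinuousAt Real.log 1 := Real.continuousAt_log one_ne_zero
      simpa [Real.log_one, Function.comp_def] using this.tendsto.comp h0
    have hsum := ha.add hb
    rw [add_zero] at hsum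
    apply hsum.congr'
    filter_upwards [eventually_ge_atTop 1] with K hK
    have hK0 : (0:ℝ) < 2*(K:ℝ) := by
      have : (1:ℝ) ≤ K := by exact_mod_cast hK
      linarith
    have : Real.log (1 + 1/(2*(K:ℝ))) = Real.log (2*K+1) - Real.log (2*K) := by
      rw [show (1:ℝ) + 1/(2*(K:ℝ)) = (2*K+1)/(2*K) by field_simp,
        Real.log_div (by linarith) hK0.ne']
    rw [this]; ring
  have := h1.sub h2
  apply this.congr'
  filter_upwards [eventually_ge_atTop 1] with K hK
  rw [partialSum_eq K hK]

lemma innerSum' (k : ℕ) :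
    HasSum (fun n : ℕ => (1/(2*((k:ℝ)+1)))^(2*(n+1)) / (((n:ℝ)+1)*(2*((n:ℝ)+1)+1)))
      (gterm k) := by
  have h := innerSum (y := (k:ℝ)+1) (le_add_of_nonneg_left k.cast_nonneg)
  rw [show (2*((k:ℝ)+1)-1) = 2*(k:ℝ)+1 from by ring,
    show (2*((k:ℝ)+1)+1) = 2*(k:ℝ)+3 from by ring] at h
  exact h

lemma gterm_nonneg (k : ℕ) : 0 ≤ gterm k :=
  (innerSum' k).nonneg fun n => by positivity

lemma hasSum_gterm : HasSum gterm (Real.log π - 1) := by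
  have hmono : Monotone (fun K : ℕ => ∑ k ∈ range K, gterm k) :=
    monotone_nat_of_le_succ fun K => by
      rw [sum_range_succ]; exact le_add_of_nonneg_right (gterm_nonneg K)
  have hbdd : ∀ K, ∑ k ∈ range K, gterm k ≤ Real.log π - 1 :=
    fun K => hmono.ge_of_tendsto tendsto_partialSum K
  have hsumm : Summable gterm := summable_of_sum_range_le gterm_nonneg hbdd
  have := hsumm.hasSum.tendsto_sum_nat
  have heq := tendsto_nhds_unique this tendsto_partialSum
  exact heq ▸ hsumm.hasSum

noncomputable def aterm (k n : ℕ) : ℝ :=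
  (1/(2*((k:ℝ)+1)))^(2*(n+1)) / (((n:ℝ)+1)*(2*((n:ℝ)+1)+1))

lemma hasSum_aterm (k : ℕ) : HasSum (aterm k) (gterm k) := innerSum' k

lemma aterm_nonneg (k n : ℕ) : 0 ≤ aterm k n := by unfold aterm; positivity

lemma summable_uncurry : Summable (Function.uncurry aterm) := by
  rw [show Function.uncurry aterm = fun p : ℕ × ℕ => aterm p.1 p.2 from rfl,
    summable_prod_of_nonneg (fun p => aterm_nonneg p.1 p.2)]
  refine ⟨fun k => (hasSum_aterm k).summable, ?_⟩
  exact hasSum_gterm.summable.congr fun k => ((hasSum_aterm k).tsum_eq).symm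

lemma swap_sum : ∑' n : ℕ, ∑' k : ℕ, aterm k n = Real.log π - 1 := by
  rw [summable_uncurry.tsum_comm' (fun k => (hasSum_aterm k).summable)
    (fun n => summable_uncurry.comp_injective (i := fun k : ℕ => (k, n))
      (fun a b h => (Prod.mk.injEq _ _ _ _ ▸ h).1))]
  calc ∑' k : ℕ, ∑' n : ℕ, aterm k n = ∑' k : ℕ, gterm k := by
        exact tsum_congr fun k => (hasSum_aterm k).tsum_eq
    _ = Real.log π - 1 := hasSum_gterm.tsum_eq

lemma column_eq (n : ℕ) :
    ∑' k : ℕ, aterm k n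
      = (∑' j : ℕ, 1/((j:ℝ))^(2*(n+1))) / (((n:ℝ)+1)*(2*((n:ℝ)+1)+1)*2^(2*(n+1))) := by
  have hm : 1 < 2*(n+1) := by omega
  have hsum : Summable (fun j : ℕ => 1/((j:ℝ))^(2*(n+1))) :=
    Real.summable_one_div_nat_pow.mpr hm
  rw [hsum.tsum_eq_zero_add]
  have h0 : (1:ℝ)/((0:ℕ):ℝ)^(2*(n+1)) = 0 := by
    simp [zero_pow (by omega : 2*(n+1) ≠ 0)]
  rw [h0, zero_add]
  rw [← tsum_div_const]
  refine tsum_congr fun k => ?_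
  unfold aterm
  push_cast
  rw [div_pow, one_pow, mul_pow, div_div, div_div]
  congr 1
  ring

theorem zeta_even_sum_log_pi :
    ∑' n : ℕ, riemannZeta ((2*(n+1) : ℕ) : ℂ) / (((n:ℂ)+1) * (2*((n:ℂ)+1)+1) * 2^(2*(n+1)))
      = ((Real.log π : ℝ) : ℂ) - 1 := by
  have hterm : ∀ n : ℕ, riemannZeta ((2*(n+1) : ℕ) : ℂ) / (((n:ℂ)+1) * (2*((n:ℂ)+1)+1) * 2^(2*(n+1)))
      = ((∑' k : ℕ, aterm k n : ℝ) : ℂ) := by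
    intro n
    rw [zeta_nat_eq_tsum_of_gt_one (by omega : 1 < 2*(n+1))]
    have hz : (∑' j : ℕ, 1/((j:ℂ))^(2*(n+1))) = ((∑' j : ℕ, 1/((j:ℝ))^(2*(n+1)) : ℝ) : ℂ) := by
      rw [Complex.ofReal_tsum]
      exact tsum_congr fun j => by
        rw [Complex.ofReal_div, Complex.ofReal_one, Complex.ofReal_pow, Complex.ofReal_natCast]
    rw [hz, column_eq]
    push_cast
    ring
  calc ∑' n : ℕ, riemannZeta ((2*(n+1) : ℕ) : ℂ) / (((n:ℂ)+1) * (2*((n:ℂ)+1)+1) * 2^(2*(n+1)))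
      = ∑' n : ℕ, ((∑' k : ℕ, aterm k n : ℝ) : ℂ) := tsum_congr hterm
    _ = ((∑' n : ℕ, ∑' k : ℕ, aterm k n : ℝ) : ℂ) := (Complex.ofReal_tsum _).symm
    _ = ((Real.log π - 1 : ℝ) : ℂ) := by rw [swap_sum]
    _ = ((Real.log π : ℝ) : ℂ) - 1 := by push_cast; ring
end

section
/- Catalan's constant satisfies G = (π/4) · ∑_{n=0}^∞ C(2n, n)² / ((2n+1)·2^{4n}), where C(2n,n) is the central binomial coefficient. -/
open Real MeasureTheory intervalIntegral

noncomputable def cb (n : ℕ) : ℝ := (Nat.centralBinom n : ℝ) / 4 ^ n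

lemma cb_pos (n : ℕ) : 0 < cb n :=
  div_pos (by exact_mod_cast Nat.centralBinom_pos n) (by positivity)

lemma cb_zero : cb 0 = 1 := by simp [cb, Nat.centralBinom]

lemma cb_rec (n : ℕ) : cb (n+1) * (2*(n:ℝ)+2) = cb n * (2*(n:ℝ)+1) := by
  have h := Nat.succ_mul_centralBinom_succ n
  have h' : ((n:ℝ)+1) * (Nat.centralBinom (n+1) : ℝ)
      = 2*(2*(n:ℝ)+1) * (Nat.centralBinom n : ℝ) := by exact_mod_cast h
  unfold cb
  have h4 : (4:ℝ)^(n+1) = 4 * 4^n := by ring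
  field_simp [h4]
  linear_combination (2*(4:ℝ)^n) * h'

lemma cb_le_one (n : ℕ) : cb n ≤ 1 := by
  induction n with
  | zero => simp [cb_zero]
  | succ k ih =>
    have h := cb_rec k
    have hk := cb_pos k
    nlinarith

lemma cb_sq (n : ℕ) : (cb n)^2 * (2*(n:ℝ)+1) ≤ 1 := by
  induction n with
  | zero => simp [cb_zero]
  | succ k ih =>
    have h := cb_rec k
    have hsq : (cb (k+1))^2 * (2*(k:ℝ)+2)^2 = (cb k)^2 * (2*(k:ℝ)+1)^2 := by
      have := congrArg (fun x => x^2) h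
      simpa [mul_pow] using this
    have h1 : (cb (k+1))^2 * (2*(k:ℝ)+3) * (2*(k:ℝ)+2)^2 ≤ (2*(k:ℝ)+2)^2 := by
      nlinarith [hsq, ih]
    have h2 : (0:ℝ) < (2*(k:ℝ)+2)^2 := by positivity
    push_cast
    nlinarith [h1, h2]

lemma summable_inv_sq : Summable (fun n : ℕ => 1/((n:ℝ)+1)^2) := by
  have h : Summable (fun n : ℕ => 1/(n:ℝ)^2) := Real.summable_one_div_nat_pow.mpr one_lt_two
  have := (summable_nat_add_iff 1).mpr h
  simpa using this

lemma summable_inv_32 : Summable (fun n : ℕ => 1/((n:ℝ)+1)^((3:ℝ)/2)) := by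
  have h : Summable (fun n : ℕ => 1/(n:ℝ)^((3:ℝ)/2)) :=
    Real.summable_one_div_nat_rpow.mpr (by norm_num)
  have := (summable_nat_add_iff 1).mpr h
  simpa using this

lemma cb_le_sqrt (n : ℕ) : cb n ≤ Real.sqrt (1/(2*(n:ℝ)+1)) := by
  have h2 : (0:ℝ) < 2*(n:ℝ)+1 := by positivity
  refine (Real.le_sqrt' (cb_pos n)).mpr ?_
  rw [le_div_iff₀ h2]
  exact cb_sq n

lemma cb_div_le (n : ℕ) : cb n / (2*(n:ℝ)+1) ≤ 1/((n:ℝ)+1)^((3:ℝ)/2) := by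
  have h2 : (0:ℝ) < 2*(n:ℝ)+1 := by positivity
  have hn1 : (0:ℝ) < (n:ℝ)+1 := by positivity
  have e1 : 1/(2*(n:ℝ)+1) ≤ 1/((n:ℝ)+1) := by
    apply one_div_le_one_div_of_le hn1; linarith
  have step1 : cb n / (2*(n:ℝ)+1) ≤ Real.sqrt (1/(2*(n:ℝ)+1)) * (1/(2*(n:ℝ)+1)) := by
    rw [div_eq_mul_one_div]
    exact mul_le_mul_of_nonneg_right (cb_le_sqrt n) (by positivity)
  have step2 : Real.sqrt (1/(2*(n:ℝ)+1)) * (1/(2*(n:ℝ)+1))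
      ≤ Real.sqrt (1/((n:ℝ)+1)) * (1/((n:ℝ)+1)) := by
    apply mul_le_mul (Real.sqrt_le_sqrt e1) e1 (by positivity) (Real.sqrt_nonneg _)
  have step3 : Real.sqrt (1/((n:ℝ)+1)) * (1/((n:ℝ)+1)) = 1/((n:ℝ)+1)^((3:ℝ)/2) := by
    have hp : (0:ℝ) < 1/((n:ℝ)+1) := by positivity
    rw [Real.sqrt_eq_rpow]
    calc (1/((n:ℝ)+1))^((1:ℝ)/2) * (1/((n:ℝ)+1))
        = (1/((n:ℝ)+1))^((1:ℝ)/2) * (1/((n:ℝ)+1))^(1:ℝ) := by rw [Real.rpow_one]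
      _ = (1/((n:ℝ)+1))^((1:ℝ)/2+1) := (Real.rpow_add hp _ _).symm
      _ = (1/((n:ℝ)+1))^((3:ℝ)/2) := by norm_num
      _ = 1^((3:ℝ)/2)/((n:ℝ)+1)^((3:ℝ)/2) := Real.div_rpow zero_le_one hn1.le _
      _ = 1/((n:ℝ)+1)^((3:ℝ)/2) := by rw [Real.one_rpow]
  rw [← step3]; linarith

lemma summable_cb_div : Summable (fun n : ℕ => cb n/(2*(n:ℝ)+1)) :=
  Summable.of_nonneg_of_le (fun n => div_nonneg (cb_pos n).le (by positivity)) (fun n => cb_div_le n) summable_inv_32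

noncomputable def fS (y : ℝ) : ℝ := ∑' n : ℕ, cb n * y^(2*n)
noncomputable def f1S (y : ℝ) : ℝ := ∑' n : ℕ, cb n * (2*(n:ℝ)) * y^(2*n-1)
noncomputable def sS (y : ℝ) : ℝ := ∑' n : ℕ, cb n/(2*(n:ℝ)+1) * y^(2*n+1)

lemma abs_bound {y : ℝ} {r : ℝ} (h : |y| ≤ r) (m : ℕ) : |y^m| ≤ r^m := by
  rw [abs_pow]; exact pow_le_pow_left₀ (abs_nonneg y) h m

lemma summable_fS {y : ℝ} (hy : |y| < 1) : Summable (fun n : ℕ => cb n * y^(2*n)) := by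
  apply Summable.of_norm_bounded (g := fun n => (y^2)^n)
    (summable_geometric_of_lt_one (by positivity) (by nlinarith [abs_nonneg y, sq_abs y]))
  intro n
  rw [Real.norm_eq_abs, abs_mul, abs_of_pos (cb_pos n), abs_pow, pow_mul, sq_abs]
  nlinarith [cb_le_one n, cb_pos n, pow_nonneg (sq_nonneg y) n]

lemma summable_u1 {r : ℝ} (hr0 : 0 < r) (hr : r < 1) :
    Summable (fun n : ℕ => 2*(n:ℝ)*r^(2*n-1)) := by
  have h : Summable (fun n : ℕ => (n:ℝ)^1 * (r^2)^n) :=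
    summable_pow_mul_geometric_of_norm_lt_one 1
      (by rw [Real.norm_eq_abs, abs_of_pos (by positivity)]; nlinarith)
  apply Summable.congr ((h.mul_left (2/r)))
  intro n
  cases n with
  | zero => simp
  | succ k =>
    have h1 : 2*(k+1) - 1 = 2*k+1 := by omega
    rw [h1]
    have h2 : (r^2)^(k+1) = r^(2*k+1) * r := by rw [← pow_mul]; ring
    rw [pow_one, h2]
    field_simp

lemma f1S_bound {z : ℝ} {r : ℝ} (hz : |z| ≤ r) (n : ℕ) :
    ‖cb n * (2*(n:ℝ)) * z^(2*n-1)‖ ≤ 2*(n:ℝ)*r^(2*n-1) := by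
  rw [Real.norm_eq_abs, abs_mul, abs_mul, abs_of_pos (cb_pos n),
    abs_of_nonneg (by positivity : (0:ℝ) ≤ 2*(n:ℝ))]
  calc cb n * (2*(n:ℝ)) * |z^(2*n-1)| ≤ 1 * (2*(n:ℝ)) * r^(2*n-1) := by
        apply mul_le_mul (by nlinarith [cb_le_one n, cb_pos n, Nat.cast_nonneg (α := ℝ) n])
          (abs_bound hz _) (abs_nonneg _) (by positivity)
    _ = 2*(n:ℝ)*r^(2*n-1) := by ring

lemma fS_bound {z : ℝ} {r : ℝ} (hz : |z| ≤ r) (hr : 0 ≤ r) (n : ℕ) :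
    ‖cb n * z^(2*n)‖ ≤ r^(2*n) := by
  rw [Real.norm_eq_abs, abs_mul, abs_of_pos (cb_pos n)]
  calc cb n * |z^(2*n)| ≤ 1 * r^(2*n) :=
        mul_le_mul (cb_le_one n) (abs_bound hz _) (abs_nonneg _) zero_le_one
    _ = r^(2*n) := one_mul _

lemma mem_Ioo_abs {y r : ℝ} (h : |y| < r) : y ∈ Set.Ioo (-r) r := by
  rw [Set.mem_Ioo]; constructor <;> [linarith [neg_abs_le y]; linarith [le_abs_self y]]

lemma hasDerivAt_fS {y : ℝ} (hy : |y| < 1) : HasDerivAt fS (f1S y) y := by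
  set r : ℝ := (|y| + 1)/2 with hr_def
  have hr0 : 0 < r := by positivity
  have hyr : |y| < r := by rw [hr_def]; linarith
  have hr1 : r < 1 := by rw [hr_def]; linarith
  unfold fS f1S
  apply hasDerivAt_tsum_of_isPreconnected (F := ℝ)
    (u := fun n : ℕ => 2*(n:ℝ)*r^(2*n-1))
    (g := fun (n : ℕ) (z : ℝ) => cb n * z^(2*n))
    (g' := fun (n : ℕ) (z : ℝ) => cb n * (2*(n:ℝ)) * z^(2*n-1))
    (t := Set.Ioo (-r) r) (y₀ := y) (y := y)
    (summable_u1 hr0 hr1) isOpen_Ioo (convex_Ioo _ _).isPreconnected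
  · intro n z _
    have h := (hasDerivAt_pow (2*n) z).const_mul (cb n)
    convert h using 1
    · rfl
    push_cast
    ring
  · intro n z hz
    exact f1S_bound (abs_le.mpr ⟨hz.1.le, hz.2.le⟩) n
  · exact mem_Ioo_abs hyr
  · exact summable_fS hy
  · exact mem_Ioo_abs hyr

lemma hasDerivAt_sS {y : ℝ} (hy : |y| < 1) : HasDerivAt sS (fS y) y := by
  set r : ℝ := (|y| + 1)/2 with hr_def
  have hr0 : 0 < r := by positivity
  have hyr : |y| < r := by rw [hr_def]; linarith
  have hr1 : r < 1 := by rw [hr_def]; linarith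
  have hsum_r : Summable (fun n : ℕ => r^(2*n)) := by
    apply Summable.congr (summable_geometric_of_lt_one (by positivity : (0:ℝ) ≤ r^2)
      (by nlinarith))
    intro n; rw [← pow_mul]
  unfold sS fS
  apply hasDerivAt_tsum_of_isPreconnected (F := ℝ)
    (u := fun n : ℕ => r^(2*n))
    (g := fun (n : ℕ) (z : ℝ) => cb n/(2*(n:ℝ)+1) * z^(2*n+1))
    (g' := fun (n : ℕ) (z : ℝ) => cb n * z^(2*n))
    (t := Set.Ioo (-r) r) (y₀ := y) (y := y)
    hsum_r isOpen_Ioo (convex_Ioo _ _).isPreconnected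
  · intro n z _
    have h21 : (0:ℝ) < 2*(n:ℝ)+1 := by positivity
    have h := (hasDerivAt_pow (2*n+1) z).const_mul (cb n/(2*(n:ℝ)+1))
    convert h using 1
    · rfl
    push_cast
    field_simp
  · intro n z hz
    exact fS_bound (abs_le.mpr ⟨hz.1.le, hz.2.le⟩) hr0.le n
  · exact mem_Ioo_abs hyr
  · apply Summable.of_norm_bounded summable_cb_div
    intro n
    rw [Real.norm_eq_abs, abs_mul, abs_div, abs_of_pos (cb_pos n),
      abs_of_pos (by positivity : (0:ℝ) < 2*(n:ℝ)+1)]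
    calc cb n/(2*(n:ℝ)+1) * |y^(2*n+1)| ≤ cb n/(2*(n:ℝ)+1) * 1 := by
          apply mul_le_mul_of_nonneg_left _ (div_nonneg (cb_pos n).le (by positivity))
          · have := abs_bound (le_of_lt hy) (2*n+1)
            simpa using this
    _ = cb n/(2*(n:ℝ)+1) := mul_one _
  · exact mem_Ioo_abs hyr

lemma summable_f1S {y : ℝ} (hy : |y| < 1) :
    Summable (fun n : ℕ => cb n * (2*(n:ℝ)) * y^(2*n-1)) := by
  set r : ℝ := (|y| + 1)/2 with hr_def
  have hr0 : 0 < r := by positivity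
  have hyr : |y| ≤ r := by rw [hr_def]; linarith
  have hr1 : r < 1 := by rw [hr_def]; linarith
  exact Summable.of_norm_bounded (summable_u1 hr0 hr1) (fun n => f1S_bound hyr n)

lemma key1 {y : ℝ} (hy : |y| < 1) : (1 - y^2) * f1S y = y * fS y := by
  have A : HasSum (fun n : ℕ => cb n * (2*(n:ℝ)) * y^(2*n-1)) (f1S y) :=
    (summable_f1S hy).hasSum
  have A2 : HasSum (fun n : ℕ => cb n * (2*(n:ℝ)+1) * y^(2*n+1)) (f1S y) := by
    have A1 := (hasSum_nat_add_iff' (f := fun n : ℕ => cb n * (2*(n:ℝ)) * y^(2*n-1)) 1).mpr A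
    have e : (fun n : ℕ => cb n * (2*(n:ℝ)+1) * y^(2*n+1))
        = (fun n : ℕ => cb (n+1) * (2*((((n:ℕ)+1:ℕ)):ℝ)) * y^(2*((n:ℕ)+1)-1)) := by
      funext n
      have h1 : 2*(n+1)-1 = 2*n+1 := by omega
      rw [h1]
      push_cast
      linear_combination (-y^(2*n+1)) * (cb_rec n)
    rw [e]
    convert A1 using 1
    · rfl
    rw [Finset.sum_range_one]
    norm_num
  have C : HasSum (fun n : ℕ => cb n * y^(2*n+1)) (y * fS y) := by
    have := (summable_fS hy).hasSum.mul_left y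
    convert this using 2 with n
    · rfl
    ring
    rfl
  have D : HasSum (fun n : ℕ => cb n * (2*(n:ℝ)) * y^(2*n+1)) (f1S y - y * fS y) := by
    have := A2.sub C
    convert this using 2 with n
    · rfl
    ring
  have B : HasSum (fun n : ℕ => cb n * (2*(n:ℝ)+1) * y^(2*n+3)) (y^2 * f1S y) := by
    have := A2.mul_left (y^2)
    convert this using 2 with n
    · rfl
    ring
  have E : HasSum (fun n : ℕ => cb n * (2*(n:ℝ)+1) * y^(2*n+3)) (f1S y - y * fS y) := by
    have E1 := (hasSum_nat_add_iff' (f := fun n : ℕ => cb n * (2*(n:ℝ)) * y^(2*n+1)) 1).mpr D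
    have e : (fun n : ℕ => cb n * (2*(n:ℝ)+1) * y^(2*n+3))
        = (fun n : ℕ => cb (n+1) * (2*((((n:ℕ)+1:ℕ)):ℝ)) * y^(2*((n:ℕ)+1)+1)) := by
      funext n
      have h1 : 2*(n+1)+1 = 2*n+3 := by omega
      rw [h1]
      push_cast
      linear_combination (-y^(2*n+3)) * (cb_rec n)
    rw [e]
    convert E1 using 1
    · rfl
    rw [Finset.sum_range_one]
    norm_num
  have huniq : y^2 * f1S y = f1S y - y * fS y := B.unique E
  linarith

lemma fS_zero : fS 0 = 1 := by
  unfold fS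
  rw [tsum_eq_single 0]
  · simp [cb_zero]
  · intro n hn
    have h : 2*n ≠ 0 := by omega
    simp [zero_pow h]

lemma sS_zero : sS 0 = 0 := by
  unfold sS
  have h : (fun n : ℕ => cb n/(2*(n:ℝ)+1) * (0:ℝ)^(2*n+1)) = fun _ => (0:ℝ) := by
    funext n
    simp
  rw [h, tsum_zero]

lemma fS_ge_one {y : ℝ} (hy0 : 0 ≤ y) (hy : |y| < 1) : 1 ≤ fS y := by
  have h := (summable_fS hy).hasSum
  have h2 := le_hasSum h 0 (fun j _ => mul_nonneg (cb_pos j).le (pow_nonneg hy0 _))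
  calc (1:ℝ) = cb 0 * y^(2*0) := by simp [cb_zero]
    _ ≤ fS y := h2

lemma sq_fS {y : ℝ} (hy0 : 0 ≤ y) (hy : y < 1) : (1 - y^2) * (fS y)^2 = 1 := by
  have habs : ∀ t ∈ Set.Icc (0:ℝ) y, |t| < 1 := by
    intro t ht
    rw [abs_of_nonneg ht.1]
    linarith [ht.2]
  have hderiv : ∀ t : ℝ, |t| < 1 →
      HasDerivAt (fun z => (1 - z^2) * (fS z)^2) 0 t := by
    intro t ht
    have h1 : HasDerivAt (fun z : ℝ => 1 - z^2) (-(2*t)) t := by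
      simpa using ((hasDerivAt_pow 2 t).const_sub 1)
    have h2 : HasDerivAt (fun z => (fS z)^2) (2 * fS t * f1S t) t := by
      have := (hasDerivAt_fS ht).fun_pow 2
      simpa [mul_comm] using this
    have h3 := h1.mul h2
    refine h3.congr_deriv (Eq.symm ?_)
    have k := key1 ht
    linear_combination (-2 * fS t) * k
  have hconst := constant_of_has_deriv_right_zero
    (f := fun z => (1 - z^2) * (fS z)^2) (a := 0) (b := y)
    (fun t ht => ((hderiv t (habs t ht)).continuousAt).continuousWithinAt)
    (fun t ht => (hderiv t (habs t (Set.mem_Icc_of_Ico ht))).hasDerivWithinAt)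
  have hy' := hconst y (Set.right_mem_Icc.mpr hy0)
  simp only [fS_zero] at hy'
  linarith [hy']

lemma sin_lt_one' {θ : ℝ} (h0 : 0 ≤ θ) (h1 : θ < π/2) : Real.sin θ < 1 := by
  have hm1 : θ ∈ Set.Icc (-(π/2)) (π/2) := ⟨by linarith [pi_pos], by linarith⟩
  have hm2 : (π/2) ∈ Set.Icc (-(π/2)) (π/2) := ⟨by linarith [pi_pos], le_refl _⟩
  have := Real.strictMonoOn_sin hm1 hm2 h1
  rwa [Real.sin_pi_div_two] at this

lemma cos_fS {θ : ℝ} (h0 : 0 ≤ θ) (h1 : θ < π/2) : Real.cos θ * fS (Real.sin θ) = 1 := by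
  have hs0 : 0 ≤ Real.sin θ := Real.sin_nonneg_of_nonneg_of_le_pi h0 (by linarith [pi_pos])
  have hs1 : Real.sin θ < 1 := sin_lt_one' h0 h1
  have habs : |Real.sin θ| < 1 := by rwa [abs_of_nonneg hs0]
  have hcos : 0 < Real.cos θ := Real.cos_pos_of_mem_Ioo ⟨by linarith [pi_pos], h1⟩
  have hsq := sq_fS hs0 hs1
  have h2 : (Real.cos θ * fS (Real.sin θ))^2 = 1 := by
    rw [mul_pow]
    have hc2 : Real.cos θ ^ 2 = 1 - Real.sin θ ^ 2 := Real.cos_sq' θ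
    rw [hc2]
    exact hsq
  have h3 : (Real.cos θ * fS (Real.sin θ) - 1) * (Real.cos θ * fS (Real.sin θ) + 1) = 0 := by
    linear_combination h2
  rcases mul_eq_zero.mp h3 with h | h
  · linarith
  · nlinarith [mul_pos hcos (lt_of_lt_of_le one_pos (fS_ge_one hs0 habs))]

lemma sS_sin {θ : ℝ} (h0 : 0 ≤ θ) (h1 : θ < π/2) : sS (Real.sin θ) = θ := by
  have hderiv : ∀ t : ℝ, 0 ≤ t → t < π/2 →
      HasDerivAt (fun z => sS (Real.sin z) - z) 0 t := by
    intro t ht0 ht1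
    have hs0 : 0 ≤ Real.sin t := Real.sin_nonneg_of_nonneg_of_le_pi ht0 (by linarith [pi_pos])
    have habs : |Real.sin t| < 1 := by
      rw [abs_of_nonneg hs0]; exact sin_lt_one' ht0 ht1
    have h1' : HasDerivAt (fun z => sS (Real.sin z)) (fS (Real.sin t) * Real.cos t) t :=
      (hasDerivAt_sS habs).comp t (Real.hasDerivAt_sin t)
    have h2' := h1'.sub (hasDerivAt_id t)
    refine h2'.congr_deriv (Eq.symm ?_)
    rw [mul_comm] at *
    have := cos_fS ht0 ht1
    linarith [this]
  have hconst := constant_of_has_deriv_right_zero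
    (f := fun z => sS (Real.sin z) - z) (a := 0) (b := θ)
    (fun t ht => ((hderiv t ht.1 (lt_of_le_of_lt ht.2 h1)).continuousAt).continuousWithinAt)
    (fun t ht => (hderiv t ht.1 (lt_of_le_of_lt ht.2.le h1)).hasDerivWithinAt)
  have h := hconst θ (Set.right_mem_Icc.mpr h0)
  simp only [Real.sin_zero, sS_zero] at h
  linarith [h]

noncomputable def FC (θ : ℝ) : ℝ := ∑' n : ℕ, cb n/(2*(n:ℝ)+1) * (Real.sin θ)^(2*n)

lemma FC_term_bound (θ : ℝ) (n : ℕ) :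
    ‖cb n/(2*(n:ℝ)+1) * (Real.sin θ)^(2*n)‖ ≤ cb n/(2*(n:ℝ)+1) := by
  have h1 : (0:ℝ) < 2*(n:ℝ)+1 := by positivity
  rw [Real.norm_eq_abs, abs_mul, abs_div, abs_of_pos (cb_pos n), abs_of_pos h1]
  calc cb n/(2*(n:ℝ)+1) * |(Real.sin θ)^(2*n)| ≤ cb n/(2*(n:ℝ)+1) * 1 := by
        apply mul_le_mul_of_nonneg_left _ (div_nonneg (cb_pos n).le h1.le)
        have := abs_bound (Real.abs_sin_le_one θ) (2*n)
        simpa using this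
    _ = cb n/(2*(n:ℝ)+1) := mul_one _

lemma summable_FC (θ : ℝ) : Summable (fun n : ℕ => cb n/(2*(n:ℝ)+1) * (Real.sin θ)^(2*n)) :=
  Summable.of_norm_bounded summable_cb_div (FC_term_bound θ)

lemma FC_cont : Continuous FC := by
  apply continuous_tsum _ summable_cb_div (fun n x => FC_term_bound x n)
  intro n
  fun_prop

lemma FC_eq {θ : ℝ} (h0 : 0 < θ) (h1 : θ < π/2) : FC θ = θ / Real.sin θ := by
  have hs : 0 < Real.sin θ := Real.sin_pos_of_pos_of_lt_pi h0 (by linarith [pi_pos])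
  have hA : HasSum (fun n : ℕ => cb n/(2*(n:ℝ)+1) * (Real.sin θ)^(2*n)) (FC θ) :=
    (summable_FC θ).hasSum
  have hB : HasSum (fun n : ℕ => cb n/(2*(n:ℝ)+1) * (Real.sin θ)^(2*n+1))
      (Real.sin θ * FC θ) := by
    have := hA.mul_left (Real.sin θ)
    convert this using 2 with n
    · rfl
    ring
  have hC : HasSum (fun n : ℕ => cb n/(2*(n:ℝ)+1) * (Real.sin θ)^(2*n+1)) (sS (Real.sin θ)) := by
    apply Summable.hasSum
    apply Summable.of_norm_bounded summable_cb_div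
    intro n
    have h1' : (0:ℝ) < 2*(n:ℝ)+1 := by positivity
    rw [Real.norm_eq_abs, abs_mul, abs_div, abs_of_pos (cb_pos n), abs_of_pos h1']
    calc cb n/(2*(n:ℝ)+1) * |(Real.sin θ)^(2*n+1)| ≤ cb n/(2*(n:ℝ)+1) * 1 := by
          apply mul_le_mul_of_nonneg_left _ (div_nonneg (cb_pos n).le h1'.le)
          have := abs_bound (Real.abs_sin_le_one θ) (2*n+1)
          simpa using this
      _ = cb n/(2*(n:ℝ)+1) := mul_one _
  have huniq : Real.sin θ * FC θ = sS (Real.sin θ) := hB.unique hC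
  rw [sS_sin h0.le h1] at huniq
  field_simp
  linarith [huniq]

/-- Wallis: `∫ θ in 0..π/2, sin θ ^ (2n) = (π/2) * cb n` -/
lemma integral_sin_even (n : ℕ) :
    ∫ θ in (0:ℝ)..(π/2), (Real.sin θ)^(2*n) = (π/2) * cb n := by
  induction n with
  | zero => simp [cb_zero]
  | succ k ih =>
    have h := integral_sin_pow (a := 0) (b := π/2) (2*k)
    have h2 : 2*(k+1) = 2*k+2 := by omega
    rw [h2, h]
    simp only [Real.sin_zero, Real.cos_pi_div_two, Real.sin_pi_div_two]
    rw [ih]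
    have hpos : (0:ℝ) < 2*(k:ℝ)+2 := by positivity
    have hrec := cb_rec k
    push_cast
    rw [zero_pow (by omega : 2*k+1 ≠ 0)]
    field_simp
    linear_combination (-π) * hrec

/-- Interchange of sum and interval integral. -/
lemma integral_tsum_interval {f : ℕ → ℝ → ℝ} {a b : ℝ} (hab : a ≤ b)
    (hc : ∀ n, Continuous (f n)) (hs : Summable fun n => ∫ x in a..b, |f n x|) :
    ∫ x in a..b, ∑' n, f n x = ∑' n, ∫ x in a..b, f n x := by
  have habs_nonneg : ∀ n, 0 ≤ ∫ x in a..b, |f n x| := by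
    intro n
    apply intervalIntegral.integral_nonneg hab
    intro x _
    exact abs_nonneg _
  have key : ∫ x in Set.Ioc a b, ∑' n, f n x = ∑' n, ∫ x in Set.Ioc a b, f n x := by
    apply MeasureTheory.integral_tsum
    · exact fun n => ((hc n).aestronglyMeasurable).restrict
    · have heq : ∀ n : ℕ, ∫⁻ x, ‖f n x‖ₑ ∂(volume.restrict (Set.Ioc a b))
          = ENNReal.ofReal (∫ x in a..b, |f n x|) := by
        intro n
        have hint : Integrable (fun x => |f n x|) (volume.restrict (Set.Ioc a b)) :=
          ((hc n).abs.intervalIntegrable a b).1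
        have h1 := ofReal_integral_eq_lintegral_ofReal hint
          (Filter.Eventually.of_forall (fun x => abs_nonneg _))
        simp_rw [Real.enorm_eq_ofReal_abs]
        rw [← h1, intervalIntegral.integral_of_le hab]
      simp_rw [heq]
      rw [← ENNReal.ofReal_tsum_of_nonneg habs_nonneg hs]
      exact ENNReal.ofReal_ne_top
  rw [intervalIntegral.integral_of_le hab, key]
  congr 1
  funext n
  rw [intervalIntegral.integral_of_le hab]

lemma subst_integral :
    ∫ x in (0:ℝ)..1, (2/(1+x^2)) * FC (2*arctan x) = ∫ θ in (0:ℝ)..(π/2), FC θ := by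
  have hder : ∀ x ∈ Set.uIcc (0:ℝ) 1,
      HasDerivAt (fun x : ℝ => 2*arctan x) (2/(1+x^2)) x := by
    intro x _
    have := (Real.hasDerivAt_arctan x).const_mul 2
    refine this.congr_deriv (Eq.symm ?_)
    ring
  have hcont : ContinuousOn (fun x : ℝ => 2/(1+x^2)) (Set.uIcc 0 1) := by
    apply Continuous.continuousOn
    apply Continuous.div continuous_const (by fun_prop)
    intro x
    positivity
  have h := intervalIntegral.integral_comp_smul_deriv hder hcont FC_cont
  simp only [smul_eq_mul, Function.comp, Real.arctan_zero, Real.arctan_one, mul_zero] at h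
  rw [h]
  have h2 : 2*(π/4) = π/2 := by ring
  rw [h2]

lemma FC2_eq {x : ℝ} (hx0 : 0 < x) (hx1 : x < 1) :
    (2/(1+x^2)) * FC (2*arctan x) = 2 * (arctan x / x) := by
  have ha0 : 0 < arctan x := by
    have := Real.arctan_strictMono hx0
    rwa [Real.arctan_zero] at this
  have ha1 : arctan x < π/4 := by
    have := Real.arctan_strictMono hx1
    rwa [Real.arctan_one] at this
  have hθ0 : 0 < 2*arctan x := by linarith
  have hθ1 : 2*arctan x < π/2 := by linarith
  rw [FC_eq hθ0 hθ1]
  have hs : Real.sin (2*arctan x) = 2*x/(1+x^2) := by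
    have hsq : Real.sqrt (1+x^2) * Real.sqrt (1+x^2) = 1+x^2 :=
      Real.mul_self_sqrt (by positivity)
    have hne : Real.sqrt (1+x^2) ≠ 0 := by positivity
    rw [Real.sin_two_mul, Real.sin_arctan, Real.cos_arctan]
    field_simp
    rw [Real.sq_sqrt (by positivity)]
  rw [hs]
  have h1 : (0:ℝ) < 1 + x^2 := by positivity
  field_simp

lemma arctan_tsum_eq {x : ℝ} (hx0 : 0 < x) (hx1 : x < 1) :
    (∑' n : ℕ, (-1:ℝ)^n * x^(2*n)/(2*(n:ℝ)+1)) = arctan x / x := by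
  have hnorm : ‖x‖ < 1 := by rw [Real.norm_eq_abs, abs_of_pos hx0]; exact hx1
  have h := (Real.hasSum_arctan hnorm).div_const x
  have e : (fun n : ℕ => (-1:ℝ)^n * x^(2*n+1)/(↑(2*n+1)) / x)
      = fun n : ℕ => (-1:ℝ)^n * x^(2*n)/(2*(n:ℝ)+1) := by
    funext n
    have hxne : x ≠ 0 := hx0.ne'
    rw [pow_succ]
    push_cast
    field_simp
  rw [e] at h
  exact h.tsum_eq

lemma per_term (n : ℕ) :
    ∫ x in (0:ℝ)..1, (-1:ℝ)^n * x^(2*n)/(2*(n:ℝ)+1) = (-1:ℝ)^n / (2*(n:ℝ)+1)^2 := by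
  have e : (fun x : ℝ => (-1:ℝ)^n * x^(2*n)/(2*(n:ℝ)+1))
      = fun x : ℝ => ((-1:ℝ)^n/(2*(n:ℝ)+1)) * x^(2*n) := by
    funext x; ring
  rw [e, intervalIntegral.integral_const_mul, integral_pow]
  have h0 : (0:ℝ)^(2*n+1) = 0 := zero_pow (by omega)
  rw [one_pow, h0]
  push_cast
  have h21 : (0:ℝ) < 2*(n:ℝ)+1 := by positivity
  field_simp
  ring

lemma per_term_abs (n : ℕ) :
    ∫ x in (0:ℝ)..1, |(-1:ℝ)^n * x^(2*n)/(2*(n:ℝ)+1)| = 1 / (2*(n:ℝ)+1)^2 := by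
  have hpos : (0:ℝ) < 2*(n:ℝ)+1 := by positivity
  have e : (fun x : ℝ => |(-1:ℝ)^n * x^(2*n)/(2*(n:ℝ)+1)|)
      = fun x : ℝ => (1/(2*(n:ℝ)+1)) * x^(2*n) := by
    funext x
    have heven : (0:ℝ) ≤ x^(2*n) := by rw [pow_mul]; positivity
    rw [abs_div, abs_mul, abs_pow, abs_neg, abs_one, one_pow, one_mul,
      abs_of_pos hpos, abs_of_nonneg heven]
    ring
  rw [e, intervalIntegral.integral_const_mul, integral_pow]
  have h0 : (0:ℝ)^(2*n+1) = 0 := zero_pow (by omega)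
  rw [one_pow, h0]
  push_cast
  field_simp
  ring

lemma summable_inv_two_sq : Summable (fun n : ℕ => 1/(2*(n:ℝ)+1)^2) := by
  apply Summable.of_nonneg_of_le (fun n => by positivity) _ summable_inv_sq
  intro n
  apply one_div_le_one_div_of_le (by positivity)
  nlinarith [Nat.cast_nonneg (α := ℝ) n]

theorem catalan_central_binomial :
    ∑' n : ℕ, (-1 : ℝ)^n / (2*(n:ℝ)+1)^2
      = (π/4) * ∑' n : ℕ, ((Nat.choose (2*n) n : ℝ))^2 / ((2*(n:ℝ)+1) * 2^(4*n)) := by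
  -- Step 1: LHS as an integral
  have step1 : ∑' n : ℕ, (-1 : ℝ)^n / (2*(n:ℝ)+1)^2
      = ∫ x in (0:ℝ)..1, ∑' n : ℕ, (-1:ℝ)^n * x^(2*n)/(2*(n:ℝ)+1) := by
    rw [integral_tsum_interval zero_le_one (fun n => by fun_prop)]
    · exact tsum_congr (fun n => (per_term n).symm)
    · apply Summable.congr summable_inv_two_sq
      intro n
      exact (per_term_abs n).symm
  -- Step 2: integrand equality a.e.
  have step2 : ∫ x in (0:ℝ)..1, (∑' n : ℕ, (-1:ℝ)^n * x^(2*n)/(2*(n:ℝ)+1))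
      = ∫ x in (0:ℝ)..1, (1/2) * ((2/(1+x^2)) * FC (2*arctan x)) := by
    apply intervalIntegral.integral_congr_ae
    have hae : ∀ᵐ x : ℝ, x ≠ 1 := by
      refine MeasureTheory.ae_iff.mpr ?_
      have : {x : ℝ | ¬ x ≠ 1} = {1} := by ext y; simp
      rw [this, Real.volume_singleton]
    filter_upwards [hae] with x hx1 hmem
    rw [Set.uIoc_of_le zero_le_one] at hmem
    have hx0 : 0 < x := hmem.1
    have hxlt : x < 1 := lt_of_le_of_ne hmem.2 hx1
    rw [arctan_tsum_eq hx0 hxlt, FC2_eq hx0 hxlt]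
    ring
  -- Step 3: substitution
  have step3 : ∫ x in (0:ℝ)..1, (1/2) * ((2/(1+x^2)) * FC (2*arctan x))
      = (1/2) * ∫ θ in (0:ℝ)..(π/2), FC θ := by
    rw [intervalIntegral.integral_const_mul, subst_integral]
  -- Step 4: interchange on FC side
  have hsin_nonneg : ∀ (θ : ℝ) (n : ℕ), (0:ℝ) ≤ (Real.sin θ)^(2*n) := by
    intro θ n
    rw [pow_mul]
    positivity
  have step4 : ∫ θ in (0:ℝ)..(π/2), FC θ
      = ∑' n : ℕ, ∫ θ in (0:ℝ)..(π/2), cb n/(2*(n:ℝ)+1) * (Real.sin θ)^(2*n) := by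
    have h := integral_tsum_interval (f := fun n θ => cb n/(2*(n:ℝ)+1) * (Real.sin θ)^(2*n))
      (by positivity : (0:ℝ) ≤ π/2) (fun n => by fun_prop) ?_
    · exact h
    · apply Summable.of_nonneg_of_le
        (fun n => intervalIntegral.integral_nonneg (by positivity)
          (fun θ _ => abs_nonneg _))
        _ (Summable.mul_left (π/2) summable_inv_two_sq)
      intro n
      have habs : (fun θ : ℝ => |cb n/(2*(n:ℝ)+1) * (Real.sin θ)^(2*n)|)
          = fun θ : ℝ => cb n/(2*(n:ℝ)+1) * (Real.sin θ)^(2*n) := by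
        funext θ
        rw [abs_of_nonneg (mul_nonneg (div_nonneg (cb_pos n).le (by positivity))
          (hsin_nonneg θ n))]
      rw [habs, intervalIntegral.integral_const_mul, integral_sin_even]
      have hb := cb_sq n
      have hpos : (0:ℝ) < 2*(n:ℝ)+1 := by positivity
      have hcb := cb_pos n
      rw [div_mul_eq_mul_div, mul_comm]
      rw [div_le_iff₀ hpos]
      calc π/2 * cb n * cb n = π/2 * ((cb n)^2) := by ring
        _ ≤ π/2 * (1/(2*(n:ℝ)+1)) := by
            apply mul_le_mul_of_nonneg_left _ (by positivity)
            rw [le_div_iff₀ hpos]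
            exact hb
        _ = π/2 * (1/(2*(n:ℝ)+1)^2) * (2*(n:ℝ)+1) := by field_simp
  -- Step 5: evaluate each integral
  have step5 : ∑' n : ℕ, ∫ θ in (0:ℝ)..(π/2), cb n/(2*(n:ℝ)+1) * (Real.sin θ)^(2*n)
      = (π/2) * ∑' n : ℕ, (cb n)^2/(2*(n:ℝ)+1) := by
    rw [← tsum_mul_left]
    apply tsum_congr
    intro n
    rw [intervalIntegral.integral_const_mul, integral_sin_even]
    ring
  -- Step 6: term conversion
  have step6 : ∑' n : ℕ, ((Nat.choose (2*n) n : ℝ))^2 / ((2*(n:ℝ)+1) * 2^(4*n))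
      = ∑' n : ℕ, (cb n)^2/(2*(n:ℝ)+1) := by
    apply tsum_congr
    intro n
    have hcb : (Nat.choose (2*n) n : ℝ) = Nat.centralBinom n := by
      rw [Nat.centralBinom_eq_two_mul_choose]
    rw [hcb]
    unfold cb
    rw [div_pow]
    have h16 : ((4:ℝ)^n)^2 = 2^(4*n) := by
      rw [← pow_mul, show (4:ℝ) = 2^2 by norm_num, ← pow_mul]
      congr 1
      ring
    rw [h16, div_div, mul_comm]
  rw [step1, step2, step3, step4, step5, step6]
  ring
end
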